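/- arXiv:1605.05252 — 3 statements merged into one kernel-verified Lean document; each statement's English description precedes it below -/
import Mathlib

section
/- Boundedness on the real axis (second assertion of Lemma 2.1): for each fixed r ≥ R₀ there is a constant M > 0 such that |y(r;k)| ≤ M for all real k. -/
open scoped Real
open Polynomial

/-- The entire extension of `z ↦ sin z / z` (value `1` at `z = 0`). -/
noncomputable def csinc (z : ℂ) : ℂ := if z = 0 then 1 else Complex.sin z / z

/-- The spherical Bessel function of the first kind of order `l`, via Rayleigh's formula
`j_l(z) = (−z)^l ((1/z)·d/dz)^l (sin z / z)`. -/
noncomputable def sphBessel (l : ℕ) (z : ℂ) : ℂ :=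
  (-z) ^ l * ((fun f : ℂ → ℂ => fun w => (1 / w) * deriv f w)^[l] csinc) z

noncomputable def sphAux (l : ℕ) : ℂ → ℂ :=
  (fun f : ℂ → ℂ => fun w => (1 / w) * deriv f w)^[l] csinc

noncomputable def Wc (A B : Polynomial ℂ) (z : ℂ) : ℂ :=
  A.eval (1/z) * Complex.sin z + B.eval (1/z) * Complex.cos z

noncomputable def dP (A B : Polynomial ℂ) : Polynomial ℂ := -(X^2 * A.derivative) - B
noncomputable def dQ (A B : Polynomial ℂ) : Polynomial ℂ := A - X^2 * B.derivative

lemma sphBessel_eq (l : ℕ) (z : ℂ) : sphBessel l z = (-z)^l * sphAux l z := rfl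

lemma sphAux_succ (l : ℕ) (z : ℂ) :
    sphAux (l+1) z = (1/z) * deriv (sphAux l) z := by
  rw [sphAux, Function.iterate_succ_apply']
  rfl

lemma hasDerivAt_one_div {z : ℂ} (hz : z ≠ 0) :
    HasDerivAt (fun w : ℂ => 1/w) (-(1/z^2)) z := by
  simpa [one_div] using hasDerivAt_inv hz

lemma Wc_hasDerivAt (A B : Polynomial ℂ) {z : ℂ} (hz : z ≠ 0) :
    HasDerivAt (Wc A B) (Wc (dP A B) (dQ A B) z) z := by
  have hA : HasDerivAt (fun w : ℂ => A.eval (1/w))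
      (A.derivative.eval (1/z) * (-(1/z^2))) z := by
    have := (A.hasDerivAt (1/z)).comp z (hasDerivAt_one_div hz)
    simpa [Function.comp_def] using this
  have hB : HasDerivAt (fun w : ℂ => B.eval (1/w))
      (B.derivative.eval (1/z) * (-(1/z^2))) z := by
    have := (B.hasDerivAt (1/z)).comp z (hasDerivAt_one_div hz)
    simpa [Function.comp_def] using this
  have h := (hA.fun_mul (Complex.hasDerivAt_sin z)).fun_add (hB.fun_mul (Complex.hasDerivAt_cos z))
  refine h.congr_deriv ?_
  simp only [Wc, dP, dQ, eval_sub, eval_neg, eval_mul, eval_pow, eval_X]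
  ring

noncomputable def sphForm (P Q : Polynomial ℂ) (m : ℕ) (z : ℂ) : ℂ := (1/z)^m * Wc P Q z

noncomputable def stepP (m : ℕ) (P Q : Polynomial ℂ) : Polynomial ℂ :=
  -(C (m:ℂ) * X * P) + dP P Q
noncomputable def stepQ (m : ℕ) (P Q : Polynomial ℂ) : Polynomial ℂ :=
  -(C (m:ℂ) * X * Q) + dQ P Q

lemma sphForm_hasDerivAt (P Q : Polynomial ℂ) (l : ℕ) {z : ℂ} (hz : z ≠ 0) :
    HasDerivAt (sphForm P Q (l+1))
      (z * sphForm (stepP (l+1) P Q) (stepQ (l+1) P Q) (l+2) z) z := by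
  have h1 : HasDerivAt (fun w : ℂ => (1/w)^(l+1))
      ((((l:ℂ)+1)) * (1/z)^l * (-(1/z^2))) z := by
    have := (hasDerivAt_one_div hz).fun_pow (l+1)
    simpa using this
  have h := h1.fun_mul (Wc_hasDerivAt P Q hz)
  refine h.congr_deriv ?_
  simp only [sphForm, stepP, stepQ, Wc, dP, dQ, eval_add, eval_sub, eval_neg, eval_mul,
    eval_pow, eval_X, eval_C]
  have hz2 : z^2 ≠ 0 := pow_ne_zero _ hz
  push_cast
  simp only [one_div, inv_pow]
  field_simp
  ring

lemma eventuallyEq_of_ne {f g : ℂ → ℂ} (h : ∀ w : ℂ, w ≠ 0 → f w = g w) {z : ℂ} (hz : z ≠ 0) :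
    f =ᶠ[nhds z] g :=
  Filter.eventually_of_mem (isOpen_ne.mem_nhds hz) h

lemma sphAux_form_succ (l : ℕ) (P Q : Polynomial ℂ)
    (h : ∀ z : ℂ, z ≠ 0 → sphAux l z = sphForm P Q (l+1) z) :
    ∀ z : ℂ, z ≠ 0 → sphAux (l+1) z = sphForm (stepP (l+1) P Q) (stepQ (l+1) P Q) (l+2) z := by
  intro z hz
  have hev : sphAux l =ᶠ[nhds z] sphForm P Q (l+1) := eventuallyEq_of_ne h hz
  have hder : deriv (sphAux l) z = z * sphForm (stepP (l+1) P Q) (stepQ (l+1) P Q) (l+2) z := by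
    rw [hev.deriv_eq, (sphForm_hasDerivAt P Q l hz).deriv]
  rw [sphAux_succ, hder]
  field_simp

lemma sphAux_form (l : ℕ) : ∃ P Q : Polynomial ℂ,
    (P.eval 0)^2 + (Q.eval 0)^2 = 1 ∧
    ∀ z : ℂ, z ≠ 0 → sphAux l z = sphForm P Q (l+1) z := by
  induction l with
  | zero =>
    refine ⟨1, 0, by simp, fun z hz => ?_⟩
    simp only [sphAux, Function.iterate_zero_apply, csinc, if_neg hz, sphForm, Wc]
    simp [hz]
    field_simp
  | succ l ih =>
    obtain ⟨P, Q, h0, hf⟩ := ih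
    refine ⟨stepP (l+1) P Q, stepQ (l+1) P Q, ?_, sphAux_form_succ l P Q hf⟩
    simp only [stepP, stepQ, dP, dQ, eval_add, eval_sub, eval_neg, eval_mul, eval_pow,
      eval_X, eval_C]
    ring_nf
    ring_nf at h0
    linear_combination h0

/-- Key packaging: form for `sphBessel` and for `z j_l(z) + z²j_l'(z)`-type combination. -/
lemma sphBessel_form (l : ℕ) : ∃ P Q : Polynomial ℂ,
    (P.eval 0)^2 + (Q.eval 0)^2 = 1 ∧
    (∀ z : ℂ, z ≠ 0 → sphBessel l z = (-1:ℂ)^l * (1/z) * Wc P Q z) ∧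
    (∀ z : ℂ, z ≠ 0 →
      sphBessel l z + z * deriv (sphBessel l) z = (-1:ℂ)^l * Wc (dP P Q) (dQ P Q) z) := by
  obtain ⟨P, Q, h0, hf⟩ := sphAux_form l
  have hb : ∀ z : ℂ, z ≠ 0 → sphBessel l z = (-1:ℂ)^l * (1/z) * Wc P Q z := by
    intro z hz
    rw [sphBessel_eq, hf z hz, sphForm]
    rw [neg_pow]
    field_simp
    rw [one_div, inv_pow, ← pow_succ, mul_inv_cancel₀ (pow_ne_zero _ hz), one_mul]
  refine ⟨P, Q, h0, hb, fun z hz => ?_⟩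
  -- sphBessel differentiable at z
  have hWd : DifferentiableAt ℂ (fun w => (-1:ℂ)^l * (1/w) * Wc P Q w) z := by
    have h1 : DifferentiableAt ℂ (fun w : ℂ => 1/w) z := by
      simpa [one_div] using (differentiableAt_inv hz)
    exact ((differentiableAt_const _).mul h1).mul (Wc_hasDerivAt P Q hz).differentiableAt
  have hev : sphBessel l =ᶠ[nhds z] (fun w => (-1:ℂ)^l * (1/w) * Wc P Q w) :=
    eventuallyEq_of_ne hb hz
  have hJd : DifferentiableAt ℂ (sphBessel l) z := (hev.differentiableAt_iff).mpr hWd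
  -- z * sphBessel l z = (-1)^l * Wc P Q z near z
  have hev2 : (fun w => w * sphBessel l w) =ᶠ[nhds z]
      (fun w => (-1:ℂ)^l * Wc P Q w) := by
    apply eventuallyEq_of_ne _ hz
    intro w hw
    rw [hb w hw]
    field_simp
  have hD1 : HasDerivAt (fun w => w * sphBessel l w)
      ((-1:ℂ)^l * Wc (dP P Q) (dQ P Q) z) z := by
    have := ((Wc_hasDerivAt P Q hz).const_mul ((-1:ℂ)^l)).congr_of_eventuallyEq hev2
    simpa using this
  have hD2 : HasDerivAt (fun w => w * sphBessel l w)
      (1 * sphBessel l z + z * deriv (sphBessel l) z) z :=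
    (hasDerivAt_id z).mul hJd.hasDerivAt
  have := hD2.unique hD1
  linear_combination this

lemma norm_sin_ofReal_le (x : ℝ) : ‖Complex.sin (x:ℂ)‖ ≤ 1 := by
  rw [← Complex.ofReal_sin]
  simp only [Complex.norm_real, Real.norm_eq_abs]
  exact abs_le.mpr ⟨Real.neg_one_le_sin x, Real.sin_le_one x⟩

lemma norm_cos_ofReal_le (x : ℝ) : ‖Complex.cos (x:ℂ)‖ ≤ 1 := by
  rw [← Complex.ofReal_cos]
  simp only [Complex.norm_real, Real.norm_eq_abs]
  exact abs_le.mpr ⟨Real.neg_one_le_cos x, Real.cos_le_one x⟩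

lemma Wc_norm_le (A B : Polynomial ℂ) {ε : ℝ} (hε : 0 < ε) :
    ∃ C : ℝ, 0 < C ∧ ∀ x : ℝ, ε ≤ |x| → ‖Wc A B (x:ℂ)‖ ≤ C := by
  obtain ⟨CA, hCA⟩ := (isCompact_closedBall (0:ℂ) (1/ε)).exists_bound_of_continuousOn
    (f := fun w : ℂ => A.eval w) (A.continuous).continuousOn
  obtain ⟨CB, hCB⟩ := (isCompact_closedBall (0:ℂ) (1/ε)).exists_bound_of_continuousOn
    (f := fun w : ℂ => B.eval w) (B.continuous).continuousOn
  refine ⟨max CA 0 + max CB 0 + 1, by positivity, fun x hx => ?_⟩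
  have hx0 : x ≠ 0 := fun h => by simp [h] at hx; linarith
  have hmem : (1/(x:ℂ)) ∈ Metric.closedBall (0:ℂ) (1/ε) := by
    simp only [Metric.mem_closedBall, dist_zero_right]
    have : ‖(1/(x:ℂ))‖ = 1/|x| := by
      rw [norm_div, norm_one, Complex.norm_real, Real.norm_eq_abs]
    rw [this]
    exact one_div_le_one_div_of_le hε hx
  have h1 := hCA _ hmem
  have h2 := hCB _ hmem
  calc ‖Wc A B (x:ℂ)‖ ≤ ‖A.eval (1/(x:ℂ)) * Complex.sin x‖ + ‖B.eval (1/(x:ℂ)) * Complex.cos x‖ :=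
        norm_add_le _ _
    _ ≤ ‖A.eval (1/(x:ℂ))‖ * 1 + ‖B.eval (1/(x:ℂ))‖ * 1 := by
        rw [norm_mul, norm_mul]
        gcongr
        · exact norm_sin_ofReal_le x
        · exact norm_cos_ofReal_le x
    _ ≤ max CA 0 + max CB 0 + 1 := by
        have := le_max_left CA 0; have := le_max_left CB 0
        nlinarith [le_max_left CA 0, le_max_left CB 0, h1, h2]

/-- Uniform decay bounds for `j_l` and its derivative on `{|x| ≥ ε}` of the real axis. -/
lemma sphBessel_decay (l : ℕ) {ε : ℝ} (hε : 0 < ε) :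
    ∃ C : ℝ, 0 < C ∧ ∀ x : ℝ, ε ≤ |x| →
      ‖sphBessel l (x:ℂ)‖ * |x| ≤ C ∧ ‖deriv (sphBessel l) (x:ℂ)‖ * |x| ≤ C := by
  obtain ⟨P, Q, h0, hb, hd⟩ := sphBessel_form l
  obtain ⟨C1, hC1, hW1⟩ := Wc_norm_le P Q hε
  obtain ⟨C2, hC2, hW2⟩ := Wc_norm_le (dP P Q) (dQ P Q) hε
  refine ⟨C1 + (C2 + C1/ε), by positivity, fun x hx => ?_⟩
  have hx0 : x ≠ 0 := fun h => by simp [h] at hx; linarith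
  have hxpos : 0 < |x| := abs_pos.mpr hx0
  have hxC : (x:ℂ) ≠ 0 := Complex.ofReal_ne_zero.mpr hx0
  have hnorm1 : ‖sphBessel l (x:ℂ)‖ = ‖Wc P Q (x:ℂ)‖ / |x| := by
    rw [hb _ hxC]
    rw [norm_mul, norm_mul, norm_pow, norm_neg, norm_one, one_pow, one_mul, norm_div,
      norm_one, Complex.norm_real, Real.norm_eq_abs, div_mul_eq_mul_div, one_mul]
  have h1 : ‖sphBessel l (x:ℂ)‖ * |x| ≤ C1 := by
    rw [hnorm1, div_mul_cancel₀ _ (ne_of_gt hxpos)]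
    exact hW1 x hx
  constructor
  · linarith [div_nonneg hC2.le hε.le, div_nonneg hC1.le hε.le, hC2.le]
  · have hid := hd _ hxC
    have : (x:ℂ) * deriv (sphBessel l) (x:ℂ)
        = (-1:ℂ)^l * Wc (dP P Q) (dQ P Q) (x:ℂ) - sphBessel l (x:ℂ) := by
      linear_combination hid
    have hn : ‖deriv (sphBessel l) (x:ℂ)‖ * |x| ≤ C2 + C1/ε := by
      have hnn : ‖(x:ℂ) * deriv (sphBessel l) (x:ℂ)‖ = |x| * ‖deriv (sphBessel l) (x:ℂ)‖ := by
        rw [norm_mul, Complex.norm_real, Real.norm_eq_abs]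
      have hle : ‖(x:ℂ) * deriv (sphBessel l) (x:ℂ)‖ ≤ C2 + C1/ε := by
        rw [this]
        refine le_trans (norm_sub_le _ _) ?_
        have e1 : ‖(-1:ℂ)^l * Wc (dP P Q) (dQ P Q) (x:ℂ)‖ = ‖Wc (dP P Q) (dQ P Q) (x:ℂ)‖ := by
          rw [norm_mul, norm_pow, norm_neg, norm_one, one_pow, one_mul]
        have e2 : ‖sphBessel l (x:ℂ)‖ ≤ C1/ε := by
          rw [hnorm1]
          exact div_le_div₀ hC1.le (hW1 x hx) hε hx
        rw [e1]
        exact add_le_add (hW2 x hx) e2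
      linarith [hnn ▸ hle]
    linarith [hC1.le, div_nonneg hC1.le hε.le]

/-- `j_l(x) + x j_l'(x)` cannot vanish identically on an interval avoiding `0`. -/
lemma sphBessel_no_interval_zero (l : ℕ) {a b : ℝ} (hab : a < b) (h0 : (0:ℝ) ∉ Set.Ioo a b)
    (hzero : ∀ x ∈ Set.Ioo a b,
      sphBessel l (x:ℂ) + (x:ℂ) * deriv (sphBessel l) (x:ℂ) = 0) : False := by
  obtain ⟨P, Q, hPQ, _, hd⟩ := sphBessel_form l
  set A := dP P Q with hA
  set B := dQ P Q with hB
  have hne : ∀ x ∈ Set.Ioo a b, x ≠ 0 := fun x hx hx0 => h0 (hx0 ▸ hx)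
  -- Wc A B vanishes on the interval
  have hW0 : ∀ x ∈ Set.Ioo a b, Wc A B (x:ℂ) = 0 := by
    intro x hx
    have hxC : (x:ℂ) ≠ 0 := Complex.ofReal_ne_zero.mpr (hne x hx)
    have := (hd _ hxC).symm.trans (hzero x hx)
    have hpow : ((-1:ℂ)^l) ≠ 0 := by
      simp
    rcases mul_eq_zero.mp this with h | h
    · exact absurd h hpow
    · exact h
  -- hence so does its derivative, i.e. Wc (dP A B) (dQ A B)
  have hW0' : ∀ x ∈ Set.Ioo a b, Wc (dP A B) (dQ A B) (x:ℂ) = 0 := by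
    intro x hx
    have hxC : (x:ℂ) ≠ 0 := Complex.ofReal_ne_zero.mpr (hne x hx)
    have hD : HasDerivAt (fun t : ℝ => Wc A B (t:ℂ)) (Wc (dP A B) (dQ A B) (x:ℂ)) x :=
      (Wc_hasDerivAt A B hxC).comp_ofReal
    have hev : (fun t : ℝ => Wc A B (t:ℂ)) =ᶠ[nhds x] (fun _ => (0:ℂ)) :=
      Filter.eventually_of_mem (isOpen_Ioo.mem_nhds hx) (fun t ht => hW0 t ht)
    have : deriv (fun t : ℝ => Wc A B (t:ℂ)) x = 0 := by
      rw [hev.deriv_eq]; exact deriv_const x 0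
    rw [← hD.deriv, this]
  -- pointwise: determinant polynomial vanishes at 1/x
  set pdet := A * (dQ A B) - B * (dP A B) with hpdet
  have hroot : ∀ x ∈ Set.Ioo a b, pdet.eval (1/(x:ℂ)) = 0 := by
    intro x hx
    have h1 := hW0 x hx
    have h2 := hW0' x hx
    simp only [Wc] at h1 h2
    set w := 1/(x:ℂ)
    set s := Complex.sin (x:ℂ)
    set c := Complex.cos (x:ℂ)
    have pyth : s^2 + c^2 = 1 := Complex.sin_sq_add_cos_sq _
    simp only [hpdet, eval_sub, eval_mul]
    set a1 := A.eval w; set b1 := B.eval w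
    set a2 := (dP A B).eval w; set b2 := (dQ A B).eval w
    have hs : (a1*b2 - b1*a2) * s = 0 := by linear_combination b2 * h1 - b1 * h2
    have hc : (a1*b2 - b1*a2) * c = 0 := by linear_combination a1 * h2 - a2 * h1
    linear_combination s*hs + c*hc - (a1*b2 - b1*a2)*pyth
  -- pdet has infinitely many roots, so pdet = 0; but pdet.eval 0 = 1
  have hinj : Set.InjOn (fun x : ℝ => 1/(x:ℂ)) (Set.Ioo a b) := by
    intro x hx y hy hxy
    have hx0 : (x:ℂ) ≠ 0 := Complex.ofReal_ne_zero.mpr (hne x hx)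
    have hy0 : (y:ℂ) ≠ 0 := Complex.ofReal_ne_zero.mpr (hne y hy)
    field_simp at hxy
    exact_mod_cast hxy.symm
  have hinf : {w : ℂ | pdet.IsRoot w}.Infinite := by
    have h1 : (Set.Ioo a b).Infinite := Set.infinite_coe_iff.mp (Set.Ioo.infinite hab)
    have h2 : ((fun x : ℝ => 1/(x:ℂ)) '' (Set.Ioo a b)).Infinite :=
      Set.Infinite.image hinj h1
    refine h2.mono ?_
    rintro w ⟨x, hx, rfl⟩
    exact hroot x hx
  have hzero' : pdet = 0 := pdet.eq_zero_of_infinite_isRoot hinf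
  have heval : pdet.eval 0 = (P.eval 0)^2 + (Q.eval 0)^2 := by
    simp only [hpdet, hA, hB, dP, dQ, eval_sub, eval_mul, eval_add, eval_neg, eval_pow, eval_X]
    ring
  rw [hzero'] at heval
  simp only [eval_zero] at heval
  rw [hPQ] at heval
  exact one_ne_zero heval.symm

set_option maxHeartbeats 1600000 in
lemma scalar_ineq {R r L k nmin Cn nr dn p q a b : ℝ}
    (hR : 0 < R) (hRr : R ≤ r) (hL : 0 ≤ L) (hk2 : 1 ≤ k^2)
    (hnmin : 0 < nmin) (hCn : 0 ≤ Cn) (hnr : nmin ≤ nr) (hn'le : dn ≤ Cn) :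
    2*(L/r^2)*(p*a + q*b) + k^2 * dn * (p^2+q^2)
      ≤ ((L/R^2)*(1 + 1/nmin) + Cn/nmin) * ((a^2+b^2) + k^2 * nr * (p^2+q^2)) := by
  set Er := (a^2+b^2) + k^2 * nr * (p^2+q^2) with hEr
  have hrpos : 0 < r := lt_of_lt_of_le hR hRr
  have hLr : L/r^2 ≤ L/R^2 := by
    apply div_le_div_of_nonneg_left hL (by positivity) ?_
    nlinarith
  have hLrnn : 0 ≤ L/r^2 := by positivity
  have hLRnn : 0 ≤ L/R^2 := by positivity
  have hdot : 2*(p*a + q*b) ≤ (a^2+b^2) + (p^2+q^2) := by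
    nlinarith [sq_nonneg (p - a), sq_nonneg (q - b)]
  have hq2nn : (0:ℝ) ≤ p^2 + q^2 := by positivity
  have hq1nn : (0:ℝ) ≤ a^2 + b^2 := by positivity
  have hk2nn : (0:ℝ) ≤ k^2 := sq_nonneg k
  have hnrnn : 0 ≤ nr := le_trans hnmin.le hnr
  have hEnn : 0 ≤ Er := by
    rw [hEr]; nlinarith [mul_nonneg (mul_nonneg hk2nn hnrnn) hq2nn]
  have hmain : nmin * (2*(L/r^2)*(p*a + q*b) + k^2 * dn * (p^2+q^2))
      ≤ (L/R^2*(nmin+1) + Cn) * Er := by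
    have h1 : 2*(L/r^2)*(p*a+q*b) ≤ (L/R^2) * ((a^2+b^2) + (p^2+q^2)) := by
      have h2 : (L/r^2) * (2*(p*a+q*b)) ≤ (L/r^2) * ((a^2+b^2)+(p^2+q^2)) :=
        mul_le_mul_of_nonneg_left hdot hLrnn
      have h3 : (L/r^2) * ((a^2+b^2)+(p^2+q^2)) ≤ (L/R^2) * ((a^2+b^2)+(p^2+q^2)) :=
        mul_le_mul_of_nonneg_right hLr (by positivity)
      nlinarith
    have h6 : nmin * (k^2 * (p^2+q^2)) ≤ Er := by
      rw [hEr]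
      nlinarith [mul_nonneg (mul_nonneg hk2nn hq2nn) (sub_nonneg.mpr hnr)]
    have h4 : nmin * (k^2 * dn * (p^2+q^2)) ≤ Cn * Er := by
      have h5 : nmin * (k^2 * dn * (p^2+q^2)) ≤ nmin * (Cn * (k^2 * (p^2+q^2))) := by
        have : k^2 * dn * (p^2+q^2) ≤ Cn * (k^2 * (p^2+q^2)) := by
          nlinarith [mul_nonneg hk2nn hq2nn]
        exact mul_le_mul_of_nonneg_left this hnmin.le
      have h5' : nmin * (Cn * (k^2 * (p^2+q^2))) = Cn * (nmin * (k^2 * (p^2+q^2))) := by ring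
      rw [h5'] at h5
      exact le_trans h5 (mul_le_mul_of_nonneg_left h6 hCn)
    have h8 : nmin * (p^2+q^2) ≤ Er := by
      have : nmin * (p^2+q^2) ≤ nmin * (k^2 * (p^2+q^2)) := by
        nlinarith [mul_nonneg hnmin.le hq2nn]
      exact le_trans this h6
    have h9 : nmin * (a^2+b^2) ≤ nmin * Er := by
      apply mul_le_mul_of_nonneg_left _ hnmin.le
      rw [hEr]
      nlinarith [mul_nonneg (mul_nonneg hk2nn hnrnn) hq2nn]
    have h7 : nmin * ((a^2+b^2)+(p^2+q^2)) ≤ (nmin+1) * Er := by nlinarith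
    have h11 := mul_le_mul_of_nonneg_left h1 hnmin.le
    have h12 := mul_le_mul_of_nonneg_left h7 hLRnn
    nlinarith
  have hnCE : nmin * ((L/R^2)*(1 + 1/nmin) + Cn/nmin) = L/R^2*(nmin+1) + Cn := by
    field_simp
  have hgoal := hmain
  rw [← hnCE] at hgoal
  have := (mul_le_mul_iff_right₀ hnmin).mp
    (by linarith : nmin * (2*(L/r^2)*(p*a + q*b) + k^2 * dn * (p^2+q^2))
      ≤ nmin * (((L/R^2)*(1 + 1/nmin) + Cn/nmin) * Er))
  exact this


lemma normSq_hasDerivAt {f : ℝ → ℂ} {f' : ℂ} {x : ℝ} (hf : HasDerivAt f f' x) :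
    HasDerivAt (fun t => Complex.normSq (f t))
      (2*((f x).re*f'.re + (f x).im*f'.im)) x := by
  have hre : HasDerivAt (fun t => (f t).re) f'.re x :=
    (Complex.reCLM.hasFDerivAt.comp_hasDerivAt x hf)
  have him : HasDerivAt (fun t => (f t).im) f'.im x :=
    (Complex.imCLM.hasFDerivAt.comp_hasDerivAt x hf)
  have h := (hre.fun_mul hre).fun_add (him.fun_mul him)
  have heq : (fun t => Complex.normSq (f t))
      = fun t => (f t).re*(f t).re + (f t).im*(f t).im := by
    funext t; simp [Complex.normSq_apply]
  rw [heq]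
  refine h.congr_deriv ?_
  ring

lemma energy_bound
    {R r₀ : ℝ} (hR : 0 < R) (hRr : R < r₀)
    {n : ℝ → ℝ}
    (hncont : ContinuousOn n (Set.Icc R r₀))
    (hnd : ∀ r ∈ Set.Ioo R r₀, HasDerivAt n (deriv n r) r)
    {nmin Cn : ℝ} (hnmin : 0 < nmin) (hCn : 0 ≤ Cn)
    (hge : ∀ r ∈ Set.Icc R r₀, nmin ≤ n r)
    (hCnb : ∀ r ∈ Set.Ioo R r₀, |deriv n r| ≤ Cn)
    {L : ℝ} (hL : 0 ≤ L)
    {k : ℝ} (hk : 1 ≤ |k|)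
    {u : ℝ → ℂ} (hu : ContDiffOn ℝ 2 u (Set.Ici R))
    (hode : ∀ r ∈ Set.Ioo R r₀, deriv (deriv u) r = (((L / r^2 - k^2 * n r : ℝ)) : ℂ) * u r) :
    Complex.normSq (u r₀) * nmin ≤
      (Complex.normSq (derivWithin u (Set.Ici R) R) + k^2 * n R * Complex.normSq (u R)) *
        Real.exp (((L/R^2)*(1 + 1/nmin) + Cn/nmin) * (r₀ - R)) := by
  set CE : ℝ := (L/R^2)*(1 + 1/nmin) + Cn/nmin with hCE
  have hk2 : 1 ≤ k^2 := by nlinarith [sq_nonneg k, sq_abs k]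
  set v : ℝ → ℂ := derivWithin u (Set.Ici R) with hv
  have hIccIci : Set.Icc R r₀ ⊆ Set.Ici R := fun t ht => ht.1
  have hucont : ContinuousOn u (Set.Icc R r₀) := (hu.continuousOn).mono hIccIci
  have hvcont : ContinuousOn v (Set.Icc R r₀) :=
    (hu.continuousOn_derivWithin (uniqueDiffOn_Ici R) one_le_two).mono hIccIci
  set E : ℝ → ℝ := fun r => Complex.normSq (v r) + k^2 * n r * Complex.normSq (u r) with hE
  have hEcont : ContinuousOn E (Set.Icc R r₀) := by
    apply ContinuousOn.add
    · exact Complex.continuous_normSq.comp_continuousOn hvcont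
    · exact (continuousOn_const.mul hncont).mul
        (Complex.continuous_normSq.comp_continuousOn hucont)
  have hu2 : ContDiffOn ℝ 2 u (Set.Ioi R) := hu.mono Set.Ioi_subset_Ici_self
  have hv1 : ContDiffOn ℝ 1 (deriv u) (Set.Ioi R) :=
    hu2.deriv_of_isOpen isOpen_Ioi (by norm_num)
  have hvr : ∀ t ∈ Set.Ioi R, v t = deriv u t := by
    intro t ht
    exact derivWithin_of_mem_nhds (Ici_mem_nhds ht)
  -- pointwise derivative of E on the interior
  have hEderiv : ∀ r ∈ Set.Ioo R r₀, HasDerivAt E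
      (2*(L/r^2)*((u r).re*(deriv u r).re + (u r).im*(deriv u r).im)
        + k^2 * deriv n r * Complex.normSq (u r)) r := by
    intro r hr
    have hrI : r ∈ Set.Ioi R := hr.1
    have hud : HasDerivAt u (deriv u r) r := by
      have := (hu2.differentiableOn two_ne_zero).differentiableAt (isOpen_Ioi.mem_nhds hrI)
      exact this.hasDerivAt
    have hvd : HasDerivAt (deriv u) (deriv (deriv u) r) r := by
      have := (hv1.differentiableOn one_ne_zero).differentiableAt (isOpen_Ioi.mem_nhds hrI)
      exact this.hasDerivAt
    have hq1 := normSq_hasDerivAt hvd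
    have hq2 := normSq_hasDerivAt hud
    have hnr := hnd r hr
    have hEtilde : HasDerivAt
        (fun t => Complex.normSq (deriv u t) + k^2 * (n t * Complex.normSq (u t)))
        (2*((deriv u r).re*(deriv (deriv u) r).re + (deriv u r).im*(deriv (deriv u) r).im)
          + k^2 * (deriv n r * Complex.normSq (u r)
            + n r * (2*((u r).re*(deriv u r).re + (u r).im*(deriv u r).im)))) r :=
      hq1.fun_add ((hnr.fun_mul hq2).const_mul (k^2))
    have hev : E =ᶠ[nhds r]
        (fun t => Complex.normSq (deriv u t) + k^2 * (n t * Complex.normSq (u t))) := by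
      apply Filter.eventually_of_mem (isOpen_Ioi.mem_nhds hrI)
      intro t ht
      simp only [hE, hvr t ht]
      ring
    have hDE := hEtilde.congr_of_eventuallyEq hev
    refine hDE.congr_deriv ?_
    rw [hode r hr]
    have hre : ∀ (c : ℝ) (z : ℂ), ((c:ℂ)*z).re = c * z.re := by
      intro c z; simp [Complex.mul_re]
    have him : ∀ (c : ℝ) (z : ℂ), ((c:ℂ)*z).im = c * z.im := by
      intro c z; simp [Complex.mul_im]
    rw [hre, him]
    ring
  -- differential inequality: E' ≤ CE * E on the interior
  have hEineq : ∀ r ∈ Set.Ioo R r₀,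
      2*(L/r^2)*((u r).re*(deriv u r).re + (u r).im*(deriv u r).im)
        + k^2 * deriv n r * Complex.normSq (u r) ≤ CE * E r := by
    intro r hr
    have hrIcc : r ∈ Set.Icc R r₀ := ⟨hr.1.le, hr.2.le⟩
    set p := (u r).re with hp; set q := (u r).im with hqq
    set a := (deriv u r).re with ha; set b := (deriv u r).im with hb
    have hvr' : v r = deriv u r := hvr r hr.1
    have hq2 : Complex.normSq (u r) = p^2 + q^2 := by rw [Complex.normSq_apply]; ring
    have hq1 : Complex.normSq (v r) = a^2 + b^2 := by
      rw [hvr', Complex.normSq_apply]; ring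
    have hEr : E r = (a^2+b^2) + k^2 * n r * (p^2+q^2) := by
      simp only [hE]; rw [hq1, hq2]
    rw [hq2, hEr]
    exact scalar_ineq hR hr.1.le hL hk2 hnmin hCn (hge r hrIcc) (le_trans (le_abs_self _) (hCnb r hr))
  -- Gronwall via antitonicity of r ↦ E r * exp (−CE r)
  set φ : ℝ → ℝ := fun r => E r * Real.exp (-CE * r) with hφ
  have hφd : ∀ r ∈ Set.Ioo R r₀, HasDerivAt φ
      ((2*(L/r^2)*((u r).re*(deriv u r).re + (u r).im*(deriv u r).im)
        + k^2 * deriv n r * Complex.normSq (u r)) * Real.exp (-CE*r)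
        + E r * (Real.exp (-CE*r) * (-CE))) r := by
    intro r hr
    have hexp : HasDerivAt (fun t : ℝ => Real.exp (-CE*t)) (Real.exp (-CE*r) * (-CE)) r := by
      have := (Real.hasDerivAt_exp (-CE*r)).comp r ((hasDerivAt_id r).const_mul (-CE))
      simpa [Function.comp_def, mul_comm] using this
    exact (hEderiv r hr).mul hexp
  have hφcont : ContinuousOn φ (Set.Icc R r₀) :=
    hEcont.mul (Real.continuous_exp.comp (continuous_const.mul continuous_id)).continuousOn
  have hφdiff : DifferentiableOn ℝ φ (interior (Set.Icc R r₀)) := by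
    rw [interior_Icc]
    intro r hr
    exact ((hφd r hr).differentiableAt).differentiableWithinAt
  have hφanti : AntitoneOn φ (Set.Icc R r₀) := by
    apply antitoneOn_of_deriv_nonpos (convex_Icc R r₀) hφcont hφdiff
    rw [interior_Icc]
    intro r hr
    rw [(hφd r hr).deriv]
    have h1 := hEineq r hr
    have h2 : (0:ℝ) < Real.exp (-CE*r) := Real.exp_pos _
    have h3 := mul_le_mul_of_nonneg_right h1 h2.le
    nlinarith [h3]
  have hRin : R ∈ Set.Icc R r₀ := ⟨le_rfl, hRr.le⟩
  have hr₀in : r₀ ∈ Set.Icc R r₀ := ⟨hRr.le, le_rfl⟩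
  have hmono := hφanti hRin hr₀in hRr.le
  -- unfold: E r₀ ≤ E R * exp (CE*(r₀ - R))
  have hstep : E r₀ ≤ E R * Real.exp (CE*(r₀ - R)) := by
    have h2 : (0:ℝ) < Real.exp (CE*r₀) := Real.exp_pos _
    have := mul_le_mul_of_nonneg_right hmono h2.le
    rw [mul_assoc, mul_assoc, ← Real.exp_add, ← Real.exp_add] at this
    have e1 : -CE*r₀ + CE*r₀ = 0 := by ring
    have e2 : -CE*R + CE*r₀ = CE*(r₀-R) := by ring
    rw [e1, e2, Real.exp_zero, mul_one] at this
    exact this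
  -- conclude
  have hfin : Complex.normSq (u r₀) * nmin ≤ E r₀ := by
    have hnr₀ := hge r₀ hr₀in
    have hq2nn : 0 ≤ Complex.normSq (u r₀) := Complex.normSq_nonneg _
    have hq1nn : 0 ≤ Complex.normSq (v r₀) := Complex.normSq_nonneg _
    simp only [hE]
    nlinarith [mul_nonneg hq2nn (sub_nonneg.mpr hnr₀),
      mul_nonneg hq2nn (sub_nonneg.mpr hk2),
      mul_nonneg (mul_nonneg hq2nn (sub_nonneg.mpr hk2)) (le_trans hnmin.le hnr₀),
      mul_nonneg (mul_nonneg hq2nn (sub_nonneg.mpr hnr₀)) (sq_nonneg k)]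
  calc Complex.normSq (u r₀) * nmin ≤ E r₀ := hfin
    _ ≤ E R * Real.exp (CE*(r₀-R)) := hstep
    _ = (Complex.normSq (derivWithin u (Set.Ici R) R) + k^2 * n R * Complex.normSq (u R)) *
        Real.exp (CE * (r₀ - R)) := by simp only [hE, hv]

set_option maxHeartbeats 2000000 in
/-- Boundedness on the real axis (second assertion of Lemma 2.1): for each fixed `r ≥ R₀`
there is `M > 0` with `|y(r;k)| ≤ M` for all real `k`. -/
theorem extended_solution_bounded_on_real_axis
    (R R₀ : ℝ) (hR : 0 < R) (hRR₀ : R < R₀)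
    (n : ℝ → ℝ) (hn : ContDiffOn ℝ 2 n (Set.Ici 0))
    (hnpos : ∀ r ∈ Set.Ici (0:ℝ), 0 < n r)
    (hnin : ∀ r ∈ Set.Icc (0:ℝ) R, n r = 1) (hnout : ∀ r ∈ Set.Ici R₀, n r = 1)
    (l : ℕ)
    (y : ℂ → ℝ → ℂ)
    (hy : ∀ k : ℂ, ContDiffOn ℝ 2 (y k) (Set.Ici R))
    (hode : ∀ k : ℂ, ∀ r ∈ Set.Ici R,
      deriv (deriv (y k)) r
        + (k ^ 2 * (n r : ℂ) - ((l * (l + 1) : ℕ) : ℂ) / (r : ℂ) ^ 2) * y k r = 0)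
    (hinit : ∀ k : ℂ, y k R = (R : ℂ) * sphBessel l (k * R))
    (hinit' : ∀ k : ℂ, deriv (y k) R =
      sphBessel l (k * R) + (R : ℂ) * k * deriv (sphBessel l) (k * R))
    (hcont : ∀ r ∈ Set.Ici R, Continuous fun k : ℂ => y k r) :
    ∀ r : ℝ, R₀ ≤ r → ∃ M : ℝ, 0 < M ∧ ∀ k : ℝ, ‖y (k : ℂ) r‖ ≤ M := by
  intro r₀ hr₀
  have hRr₀ : R < r₀ := lt_of_lt_of_le hRR₀ hr₀
  have hr₀Ici : r₀ ∈ Set.Ici R := le_of_lt hRr₀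
  -- facts about n on [R, r₀]
  have hIccsub : Set.Icc R r₀ ⊆ Set.Ici (0:ℝ) := fun t ht => le_trans hR.le ht.1
  have hncont : ContinuousOn n (Set.Icc R r₀) := hn.continuousOn.mono hIccsub
  obtain ⟨rm, hrm, hminOn⟩ := isCompact_Icc.exists_isMinOn
    ⟨R, Set.left_mem_Icc.mpr hRr₀.le⟩ hncont
  have hmin : ∀ t ∈ Set.Icc R r₀, n rm ≤ n t := fun t ht => hminOn ht
  set nmin := n rm with hnmindef
  have hnminpos : 0 < nmin := hnpos rm (le_trans hR.le hrm.1)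
  have hn1 : ContDiffOn ℝ 2 n (Set.Ioi 0) := hn.mono Set.Ioi_subset_Ici_self
  have hIccIoi : Set.Icc R r₀ ⊆ Set.Ioi (0:ℝ) := fun t ht => lt_of_lt_of_le hR ht.1
  have hdnc : ContinuousOn (deriv n) (Set.Icc R r₀) :=
    (hn1.continuousOn_deriv_of_isOpen isOpen_Ioi one_le_two).mono hIccIoi
  obtain ⟨Cn0, hCn0⟩ := isCompact_Icc.exists_bound_of_continuousOn hdnc
  set Cn := max Cn0 0 with hCndef
  have hCn : 0 ≤ Cn := le_max_right _ _
  have hCnb : ∀ r ∈ Set.Ioo R r₀, |deriv n r| ≤ Cn := by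
    intro r hr
    exact le_trans (hCn0 r ⟨hr.1.le, hr.2.le⟩) (le_max_left _ _)
  have hnd : ∀ r ∈ Set.Ioo R r₀, HasDerivAt n (deriv n r) r := by
    intro r hr
    have hrpos : r ∈ Set.Ioi (0:ℝ) := lt_of_lt_of_le hR hr.1.le
    exact ((hn1.differentiableOn two_ne_zero).differentiableAt
      (isOpen_Ioi.mem_nhds hrpos)).hasDerivAt
  -- Bessel decay constants
  obtain ⟨Cb, hCbpos, hdecay⟩ := sphBessel_decay l hR
  set L : ℝ := (l:ℝ) * ((l:ℝ)+1) with hLdef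
  have hL : 0 ≤ L := by positivity
  set CE : ℝ := (L/R^2)*(1 + 1/nmin) + Cn/nmin with hCEdef
  set C₁ : ℝ := (Cb/R + Cb)^2 + Cb^2 with hC₁def
  set M₁ : ℝ := Real.sqrt ((C₁ * Real.exp (CE*(r₀ - R)))/nmin) with hM₁def
  -- continuity bound for |k| ≤ 1
  have hycont : Continuous fun k : ℝ => ‖y (k:ℂ) r₀‖ :=
    ((hcont r₀ hr₀Ici).comp Complex.continuous_ofReal).norm
  obtain ⟨k₂, hk₂mem, hk₂maxOn⟩ := isCompact_Icc.exists_isMaxOn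
    (Set.nonempty_Icc.mpr (by norm_num : (-1:ℝ) ≤ 1)) hycont.continuousOn
  have hk₂max : ∀ t ∈ Set.Icc (-1:ℝ) 1, ‖y (t:ℂ) r₀‖ ≤ ‖y ((k₂:ℝ):ℂ) r₀‖ :=
    fun t ht => hk₂maxOn ht
  set M₂ : ℝ := ‖y ((k₂:ℝ):ℂ) r₀‖ with hM₂def
  set M : ℝ := max M₁ M₂ + 1 with hMdef
  have hM₁nn : 0 ≤ M₁ := Real.sqrt_nonneg _
  have hMpos : 0 < M := by
    have := le_max_left M₁ M₂; nlinarith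
  refine ⟨M, hMpos, ?_⟩
  -- the bound for good k with |k| ≥ 1
  have hgood : ∀ k : ℝ, 1 ≤ |k| → DifferentiableAt ℝ (y (k:ℂ)) R → ‖y (k:ℂ) r₀‖ ≤ M₁ := by
    intro k hk hdiff
    set u : ℝ → ℂ := y (k:ℂ) with hu
    have hkne : k ≠ 0 := by intro h; rw [h] at hk; simp at hk; linarith
    have hodeK : ∀ r ∈ Set.Ioo R r₀,
        deriv (deriv u) r = (((L / r^2 - k^2 * n r : ℝ)) : ℂ) * u r := by
      intro r hr
      have hrpos : (0:ℝ) < r := lt_trans hR hr.1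
      have h := hode (k:ℂ) r (le_of_lt hr.1)
      have hrne : (r:ℂ) ≠ 0 := by exact_mod_cast ne_of_gt hrpos
      have hr2ne : (r:ℂ)^2 ≠ 0 := pow_ne_zero _ hrne
      push_cast [hLdef] at h ⊢
      field_simp at h ⊢
      linear_combination h
    have hE := energy_bound hR hRr₀ hncont hnd hnminpos hCn hmin hCnb hL hk (hy _) hodeK
    -- initial data bounds
    set x : ℝ := k * R with hxdef
    have hxabs : |x| = |k| * R := by rw [hxdef, abs_mul, abs_of_pos hR]
    have hxge : R ≤ |x| := by rw [hxabs]; nlinarith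
    have hxpos : 0 < |x| := lt_of_lt_of_le hR hxge
    obtain ⟨hd1, hd2⟩ := hdecay x hxge
    have hcast : ((x:ℝ):ℂ) = (k:ℂ) * (R:ℂ) := by push_cast [hxdef]; ring
    -- derivWithin u (Ici R) R = deriv u R
    have hvR : derivWithin u (Set.Ici R) R = deriv u R :=
      hdiff.derivWithin ((uniqueDiffOn_Ici R) R Set.self_mem_Ici)
    have hDR : deriv u R = sphBessel l ((k:ℂ)*(R:ℂ))
        + (R:ℂ) * (k:ℂ) * deriv (sphBessel l) ((k:ℂ)*(R:ℂ)) := hinit' (k:ℂ)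
    have hj : ‖sphBessel l ((k:ℂ)*(R:ℂ))‖ ≤ Cb / |x| := by
      rw [← hcast]
      exact (le_div_iff₀ hxpos).mpr hd1
    have hj' : ‖deriv (sphBessel l) ((k:ℂ)*(R:ℂ))‖ ≤ Cb / |x| := by
      rw [← hcast]
      exact (le_div_iff₀ hxpos).mpr hd2
    have hjR : Cb / |x| ≤ Cb / R := div_le_div_of_nonneg_left hCbpos.le hR hxge
    have hnormDR : ‖deriv u R‖ ≤ Cb/R + Cb := by
      rw [hDR]
      refine le_trans (norm_add_le _ _) (add_le_add (le_trans hj hjR) ?_)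
      rw [norm_mul, norm_mul, Complex.norm_real, Complex.norm_real,
        Real.norm_eq_abs, Real.norm_eq_abs, abs_of_pos hR]
      have : R * |k| = |x| := by rw [hxabs]; ring
      rw [this]
      calc |x| * ‖deriv (sphBessel l) ((k:ℂ)*(R:ℂ))‖ ≤ |x| * (Cb/|x|) := by
            exact mul_le_mul_of_nonneg_left hj' hxpos.le
        _ = Cb := by field_simp
    have hns : ∀ z : ℂ, Complex.normSq z = ‖z‖^2 := fun z => by
      rw [← Complex.sq_norm]
    have hnR1 : n R = 1 := hnin R ⟨hR.le, le_rfl⟩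
    have hkabs : 0 < |k| := lt_of_lt_of_le one_pos hk
    have huR : ‖u R‖ ≤ Cb / |k| := by
      rw [hu, hinit (k:ℂ), norm_mul, Complex.norm_real, Real.norm_eq_abs, abs_of_pos hR]
      calc R * ‖sphBessel l ((k:ℂ)*(R:ℂ))‖ ≤ R * (Cb/|x|) :=
            mul_le_mul_of_nonneg_left hj hR.le
        _ = Cb / |k| := by rw [hxabs]; field_simp
    have hk2uR : |k| * ‖u R‖ ≤ Cb := by
      calc |k| * ‖u R‖ ≤ |k| * (Cb/|k|) := mul_le_mul_of_nonneg_left huR hkabs.le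
        _ = Cb := by field_simp
    have hERbound : Complex.normSq (derivWithin u (Set.Ici R) R)
        + k^2 * n R * Complex.normSq (u R) ≤ C₁ := by
      rw [hvR, hnR1, hns, hns, hC₁def]
      have h1 : ‖deriv u R‖^2 ≤ (Cb/R + Cb)^2 :=
        pow_le_pow_left₀ (norm_nonneg _) hnormDR 2
      have h2 : k^2 * 1 * ‖u R‖^2 ≤ Cb^2 := by
        have := pow_le_pow_left₀ (mul_nonneg hkabs.le (norm_nonneg _)) hk2uR 2
        have hsq : (|k| * ‖u R‖)^2 = k^2 * 1 * ‖u R‖^2 := by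
          rw [mul_pow, sq_abs]; ring
        linarith [hsq ▸ this]
      linarith
    -- combine
    have hexp : (0:ℝ) < Real.exp (CE*(r₀ - R)) := Real.exp_pos _
    have htot : Complex.normSq (u r₀) * nmin ≤ C₁ * Real.exp (CE*(r₀ - R)) := by
      refine le_trans hE ?_
      rw [hCEdef]
      exact mul_le_mul_of_nonneg_right hERbound hexp.le
    have hfin : Complex.normSq (u r₀) ≤ (C₁ * Real.exp (CE*(r₀ - R)))/nmin := by
      rw [le_div_iff₀ hnminpos]
      exact htot
    calc ‖u r₀‖ = Real.sqrt (Complex.normSq (u r₀)) := by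
          rw [hns]; exact (Real.sqrt_sq (norm_nonneg _)).symm
      _ ≤ M₁ := by
          rw [hM₁def]
          exact Real.sqrt_le_sqrt hfin
  -- final glue via closedness and density of good parameters
  intro k
  set S := {t : ℝ | ‖y (t:ℂ) r₀‖ ≤ M} with hSdef
  have hSclosed : IsClosed S := isClosed_le hycont continuous_const
  have hM₂M : M₂ ≤ M := by
    have := le_max_right M₁ M₂; rw [hMdef]; linarith
  have hM₁M : M₁ ≤ M := by
    have := le_max_left M₁ M₂; rw [hMdef]; linarith
  by_contra hkS
  have hk1 : 1 < |k| := by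
    by_contra hle
    push_neg at hle
    have : k ∈ Set.Icc (-1:ℝ) 1 := abs_le.mp hle
    exact hkS (le_trans (hk₂max k this) hM₂M)
  obtain ⟨δ, hδpos, hball⟩ := Metric.isOpen_iff.mp hSclosed.isOpen_compl k hkS
  set δ' : ℝ := min δ ((|k|-1)/2) with hδ'def
  have hδ'pos : 0 < δ' := lt_min hδpos (by linarith)
  set I := Set.Ioo (k - δ') (k + δ') with hIdef
  have hIsub : ∀ t ∈ I, t ∉ S := by
    intro t ht
    apply hball
    rw [Metric.mem_ball, Real.dist_eq, abs_lt]
    constructor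
    · have := ht.1; have := min_le_left δ ((|k|-1)/2); linarith
    · have := ht.2; have := min_le_left δ ((|k|-1)/2); linarith
  have habs : ∀ t ∈ I, 1 ≤ |t| := by
    intro t ht
    have h1 : |t - k| < δ' := by
      rw [abs_lt]; exact ⟨by linarith [ht.1], by linarith [ht.2]⟩
    have h2 : δ' ≤ (|k|-1)/2 := min_le_right _ _
    have h3 : |k| - |t| ≤ |t - k| := by
      have := abs_sub_abs_le_abs_sub k t
      rw [abs_sub_comm] at this
      linarith
    linarith
  have hbad : ∀ x ∈ Set.Ioo ((k - δ')*R) ((k + δ')*R),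
      sphBessel l (x:ℂ) + (x:ℂ) * deriv (sphBessel l) (x:ℂ) = 0 := by
    intro x hx
    set t : ℝ := x / R with htdef
    have hxt : x = t * R := by rw [htdef]; field_simp
    have htI : t ∈ I := by
      constructor
      · rw [htdef, lt_div_iff₀ hR]; exact hx.1
      · rw [htdef, div_lt_iff₀ hR]; exact hx.2
    have htS : t ∉ S := hIsub t htI
    have hnotdiff : ¬ DifferentiableAt ℝ (y (t:ℂ)) R := by
      intro hdiff
      exact htS (le_trans (hgood t (habs t htI) hdiff) hM₁M)
    have hzero : deriv (y (t:ℂ)) R = 0 := deriv_zero_of_not_differentiableAt hnotdiff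
    have h := hinit' (t:ℂ)
    rw [hzero] at h
    have hcast : ((x:ℝ):ℂ) = (t:ℂ) * (R:ℂ) := by rw [hxt]; push_cast; ring
    rw [hcast]
    linear_combination -h
  have hab' : (k - δ')*R < (k + δ')*R := by nlinarith
  have h0J : (0:ℝ) ∉ Set.Ioo ((k - δ')*R) ((k + δ')*R) := by
    intro h0
    have h1 : k - δ' < 0 := by nlinarith [h0.1]
    have h2 : 0 < k + δ' := by nlinarith [h0.2]
    have := habs 0 ⟨h1, h2⟩
    norm_num at this
  exact sphBessel_no_interval_zero l hab' h0J hbad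
end

section
/- Indicator of the spherical Bessel function (Lemma 3.7, first part): for every R₀ > 0, every l ∈ ℕ and every θ ∈ [0, 2π], the indicator function of the entire function k ↦ j_l(k·R₀) equals R₀·|sin θ|, i.e. limsup_{r→∞} log|j_l(R₀·r·e^{iθ})| / r = R₀·|sin θ|. -/
open scoped Real
open Polynomial Filter Topology

/-- The (Lindelöf) indicator function of order 1 of `f : ℂ → ℂ`, valued in `[−∞,+∞]`. -/
noncomputable def indic (f : ℂ → ℂ) (θ : ℝ) : EReal :=
  Filter.limsup
    (fun r : ℝ => ((Real.log ‖f (r * Complex.exp (θ * Complex.I))‖ / r : ℝ) : EReal))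
    Filter.atTop

namespace SphAux

noncomputable def PA : ℕ → Polynomial ℂ
  | 0 => C (-Complex.I / 2)
  | (l+1) => (derivative (PA l) + C Complex.I * PA l) * X - C (2*l+1 : ℂ) * PA l

noncomputable def PB : ℕ → Polynomial ℂ
  | 0 => C (Complex.I / 2)
  | (l+1) => (derivative (PB l) - C Complex.I * PB l) * X - C (2*l+1 : ℂ) * PB l

lemma natDegree_PA_le (l : ℕ) : (PA l).natDegree ≤ l := by
  induction l with
  | zero => simp [PA]
  | succ l ih =>
    rw [PA]
    refine le_trans (natDegree_sub_le _ _) (max_le ?_ ?_)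
    · refine le_trans (natDegree_mul_le) ?_
      have h1 : (derivative (PA l) + C Complex.I * PA l).natDegree ≤ l := by
        refine le_trans (natDegree_add_le _ _) (max_le ?_ ?_)
        · exact le_trans (natDegree_derivative_le _) ((Nat.sub_le _ 1).trans ih)
        · exact (natDegree_C_mul_le _ _).trans ih
      exact add_le_add h1 natDegree_X_le
    · exact ((natDegree_C_mul_le _ _).trans ih).trans (Nat.le_succ l)

lemma natDegree_PB_le (l : ℕ) : (PB l).natDegree ≤ l := by
  induction l with
  | zero => simp [PB]
  | succ l ih =>
    rw [PB]
    refine le_trans (natDegree_sub_le _ _) (max_le ?_ ?_)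
    · refine le_trans (natDegree_mul_le) ?_
      have h1 : (derivative (PB l) - C Complex.I * PB l).natDegree ≤ l := by
        refine le_trans (natDegree_sub_le _ _) (max_le ?_ ?_)
        · exact le_trans (natDegree_derivative_le _) ((Nat.sub_le _ 1).trans ih)
        · exact (natDegree_C_mul_le _ _).trans ih
      exact add_le_add h1 natDegree_X_le
    · exact ((natDegree_C_mul_le _ _).trans ih).trans (Nat.le_succ l)

lemma coeff_PA (l : ℕ) : (PA l).coeff l = (-Complex.I / 2) * Complex.I ^ l := by
  induction l with
  | zero => simp [PA]
  | succ l ih =>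
    rw [PA, coeff_sub, coeff_mul_X, coeff_add, coeff_derivative, coeff_C_mul, coeff_C_mul]
    have h1 : (PA l).coeff (l + 1) = 0 :=
      coeff_eq_zero_of_natDegree_lt (lt_of_le_of_lt (natDegree_PA_le l) (Nat.lt_succ_self l))
    rw [h1, ih]
    ring

lemma coeff_PB (l : ℕ) : (PB l).coeff l = (Complex.I / 2) * (-Complex.I) ^ l := by
  induction l with
  | zero => simp [PB]
  | succ l ih =>
    rw [PB, coeff_sub, coeff_mul_X, coeff_sub, coeff_derivative, coeff_C_mul, coeff_C_mul]
    have h1 : (PB l).coeff (l + 1) = 0 :=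
      coeff_eq_zero_of_natDegree_lt (lt_of_le_of_lt (natDegree_PB_le l) (Nat.lt_succ_self l))
    rw [h1, ih]
    ring

lemma norm_coeff_PA (l : ℕ) : ‖(PA l).coeff l‖ = 1 / 2 := by
  rw [coeff_PA]; simp [norm_mul, norm_pow, norm_div]

lemma norm_coeff_PB (l : ℕ) : ‖(PB l).coeff l‖ = 1 / 2 := by
  rw [coeff_PB]; simp [norm_mul, norm_pow, norm_div]

/-- The numerator function. -/
noncomputable def NN (l : ℕ) (z : ℂ) : ℂ :=
  (PA l).eval z * Complex.exp (Complex.I * z) + (PB l).eval z * Complex.exp (-(Complex.I * z))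

noncomputable def FF (l : ℕ) (z : ℂ) : ℂ := NN l z / z ^ (2 * l + 1)

lemma iter_eq (l : ℕ) : ∀ z : ℂ, z ≠ 0 →
    ((fun f : ℂ → ℂ => fun w => (1 / w) * deriv f w)^[l] csinc) z = FF l z := by
  induction l with
  | zero =>
    intro z hz
    have hs : Complex.sin z = (-Complex.I/2) * Complex.exp (Complex.I*z)
        + (Complex.I/2) * Complex.exp (-(Complex.I*z)) := by
      have h0 : Complex.sin z
          = (Complex.exp (-z * Complex.I) - Complex.exp (z * Complex.I)) * Complex.I / 2 := rfl
      rw [h0, show -z * Complex.I = -(Complex.I*z) by ring,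
        show z * Complex.I = Complex.I*z by ring]
      ring
    simp only [Function.iterate_zero, id_eq, FF, NN, PA, PB, eval_C, csinc, if_neg hz, pow_one]
    rw [hs]
    norm_num
  | succ l ih =>
    intro z hz
    rw [Function.iterate_succ_apply']
    have hev : ((fun f : ℂ → ℂ => fun w => (1 / w) * deriv f w)^[l] csinc) =ᶠ[nhds z] FF l := by
      filter_upwards [compl_singleton_mem_nhds hz] with w hw
      exact ih w hw
    have hder : HasDerivAt (FF l)
        (((eval z (derivative (PA l)) + Complex.I * eval z (PA l)) * Complex.exp (Complex.I * z)
          + (eval z (derivative (PB l)) - Complex.I * eval z (PB l)) * Complex.exp (-(Complex.I * z)))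
            / z ^ (2 * l + 1)
          - NN l z * ((2 * l + 1) * z ^ (2 * l)) / (z ^ (2 * l + 1)) ^ 2) z := by
      have hA : HasDerivAt (fun w => eval w (PA l)) (eval z (derivative (PA l))) z :=
        (PA l).hasDerivAt z
      have hB : HasDerivAt (fun w => eval w (PB l)) (eval z (derivative (PB l))) z :=
        (PB l).hasDerivAt z
      have he1 : HasDerivAt (fun w : ℂ => Complex.exp (Complex.I * w))
          (Complex.exp (Complex.I * z) * Complex.I) z := by
        have : HasDerivAt (fun w : ℂ => Complex.I * w) Complex.I z := by
          simpa using (hasDerivAt_id z).const_mul Complex.I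
        exact this.cexp
      have he2 : HasDerivAt (fun w : ℂ => Complex.exp (-(Complex.I * w)))
          (Complex.exp (-(Complex.I * z)) * (-Complex.I)) z := by
        have : HasDerivAt (fun w : ℂ => -(Complex.I * w)) (-Complex.I) z := by
          have h0 : HasDerivAt (fun w : ℂ => Complex.I * w) Complex.I z := by
            simpa using (hasDerivAt_id z).const_mul Complex.I
          exact h0.neg
        exact this.cexp
      have hN : HasDerivAt (NN l)
          ((eval z (derivative (PA l)) + Complex.I * eval z (PA l)) * Complex.exp (Complex.I * z)
            + (eval z (derivative (PB l)) - Complex.I * eval z (PB l))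
              * Complex.exp (-(Complex.I * z))) z := by
        have := (hA.mul he1).add (hB.mul he2)
        refine this.congr_deriv ?_
        ring
      have hpow : HasDerivAt (fun w : ℂ => w ^ (2 * l + 1))
          ((2 * l + 1 : ℂ) * z ^ (2 * l)) z := by
        simpa using hasDerivAt_pow (2 * l + 1) z
      have hzp : z ^ (2 * l + 1) ≠ 0 := pow_ne_zero _ hz
      have := hN.div hpow hzp
      refine this.congr_deriv ?_
      field_simp
    have : deriv ((fun f : ℂ → ℂ => fun w => (1 / w) * deriv f w)^[l] csinc) z
        = deriv (FF l) z := hev.deriv_eq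
    rw [this, hder.deriv]
    show (1 / z) * _ = FF (l + 1) z
    simp only [FF, NN, PA, PB, eval_sub, eval_add, eval_mul, eval_C, eval_X]
    have hzp : z ^ (2 * l) ≠ 0 := pow_ne_zero _ hz
    field_simp
    ring

lemma norm_sphBessel (l : ℕ) {z : ℂ} (hz : z ≠ 0) :
    ‖sphBessel l z‖ = ‖NN l z‖ / ‖z‖ ^ (l + 1) := by
  rw [sphBessel, iter_eq l z hz, FF, norm_mul, norm_div, norm_pow, norm_pow, norm_neg]
  have h0 : (0:ℝ) < ‖z‖ := norm_pos_iff.mpr hz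
  have h2 : (‖z‖:ℝ) ^ (2 * l + 1) = ‖z‖ ^ l * ‖z‖ ^ (l + 1) := by
    rw [← pow_add]; congr 1; omega
  have h4 : (‖z‖:ℝ) ^ l ≠ 0 := by positivity
  rw [h2, ← div_div, ← mul_div_assoc, ← mul_div_assoc, mul_div_cancel_left₀ _ h4]

lemma poly_upper (p : Polynomial ℂ) (n : ℕ) (h : p.natDegree ≤ n) :
    ∃ C : ℝ, 0 < C ∧ ∀ z : ℂ, 1 ≤ ‖z‖ → ‖p.eval z‖ ≤ C * ‖z‖ ^ n := by
  refine ⟨(∑ i ∈ Finset.range (n + 1), ‖p.coeff i‖) + 1, by positivity, fun z hz => ?_⟩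
  have he : p.eval z = ∑ i ∈ Finset.range (n + 1), p.coeff i * z ^ i :=
    eval_eq_sum_range' (lt_of_le_of_lt h (Nat.lt_succ_self n)) z
  calc ‖p.eval z‖ ≤ ∑ i ∈ Finset.range (n + 1), ‖p.coeff i * z ^ i‖ := by
        rw [he]; exact norm_sum_le _ _
    _ ≤ ∑ i ∈ Finset.range (n + 1), ‖p.coeff i‖ * ‖z‖ ^ n := by
        refine Finset.sum_le_sum fun i hi => ?_
        rw [norm_mul, norm_pow]
        exact mul_le_mul_of_nonneg_left
          (pow_le_pow_right₀ hz (Finset.mem_range_succ_iff.mp hi)) (norm_nonneg _)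
    _ = (∑ i ∈ Finset.range (n + 1), ‖p.coeff i‖) * ‖z‖ ^ n := by rw [Finset.sum_mul]
    _ ≤ ((∑ i ∈ Finset.range (n + 1), ‖p.coeff i‖) + 1) * ‖z‖ ^ n := by
        have : (0:ℝ) ≤ ‖z‖ ^ n := by positivity
        nlinarith

lemma poly_sub_lead (p : Polynomial ℂ) (n : ℕ) (hd : p.natDegree ≤ n) (hc : p.coeff n = 0) :
    ∃ C : ℝ, 0 < C ∧ ∀ z : ℂ, 1 ≤ ‖z‖ → ‖p.eval z‖ * ‖z‖ ≤ C * ‖z‖ ^ n := by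
  rcases eq_or_ne p 0 with rfl | hp
  · refine ⟨1, one_pos, fun z hz => by simp⟩
  · have hdn : p.natDegree < n := by
      rcases lt_or_eq_of_le hd with h | h
      · exact h
      · exfalso
        apply Polynomial.leadingCoeff_ne_zero.mpr hp
        rw [Polynomial.leadingCoeff, h]
        exact hc
    obtain ⟨Cc, hC0, hB⟩ := poly_upper p p.natDegree le_rfl
    refine ⟨Cc, hC0, fun z hz => ?_⟩
    calc ‖p.eval z‖ * ‖z‖ ≤ Cc * ‖z‖ ^ p.natDegree * ‖z‖ := by
          exact mul_le_mul_of_nonneg_right (hB z hz) (norm_nonneg _)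
      _ = Cc * ‖z‖ ^ (p.natDegree + 1) := by rw [pow_succ]; ring
      _ ≤ Cc * ‖z‖ ^ n := by
          exact mul_le_mul_of_nonneg_left (pow_le_pow_right₀ hz (by omega)) hC0.le

lemma poly_lower (q : Polynomial ℂ) (n : ℕ) (hd : q.natDegree ≤ n) (hc : q.coeff n ≠ 0) :
    ∃ R : ℝ, 1 ≤ R ∧ ∀ z : ℂ, R ≤ ‖z‖ → ‖q.coeff n‖ / 2 * ‖z‖ ^ n ≤ ‖q.eval z‖ := by
  set p : Polynomial ℂ := q - C (q.coeff n) * X ^ n with hp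
  have hpd : p.natDegree ≤ n := by
    refine le_trans (natDegree_sub_le _ _) (max_le hd ?_)
    exact le_trans natDegree_mul_le (by simp)
  have hpc : p.coeff n = 0 := by
    simp [hp, coeff_sub, coeff_C_mul, coeff_X_pow]
  obtain ⟨Cc, hC0, hB⟩ := poly_sub_lead p n hpd hpc
  set a : ℝ := ‖q.coeff n‖ with ha
  have ha0 : 0 < a := norm_pos_iff.mpr hc
  refine ⟨max 1 (2 * Cc / a), le_max_left _ _, fun z hz => ?_⟩
  have hz1 : 1 ≤ ‖z‖ := le_trans (le_max_left _ _) hz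
  have hz0 : (0:ℝ) < ‖z‖ := lt_of_lt_of_le one_pos hz1
  have hz2 : 2 * Cc / a ≤ ‖z‖ := le_trans (le_max_right _ _) hz
  have hCa : 2 * Cc ≤ a * ‖z‖ := by
    rw [div_le_iff₀ ha0] at hz2
    linarith
  have hpe : ‖p.eval z‖ * ‖z‖ ≤ Cc * ‖z‖ ^ n := hB z hz1
  have hqe : q.eval z = q.coeff n * z ^ n + p.eval z := by
    simp [hp, eval_sub, eval_mul, eval_C, eval_pow, eval_X]
  have hnorm : a * ‖z‖ ^ n - ‖p.eval z‖ ≤ ‖q.eval z‖ := by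
    have h5 : ‖q.coeff n * z ^ n‖ ≤ ‖q.eval z‖ + ‖p.eval z‖ := by
      calc ‖q.coeff n * z ^ n‖ = ‖q.eval z - p.eval z‖ := by rw [hqe]; ring_nf
        _ ≤ ‖q.eval z‖ + ‖p.eval z‖ := norm_sub_le _ _
    rw [norm_mul, norm_pow] at h5
    linarith
  have hpn : ‖p.eval z‖ ≤ a / 2 * ‖z‖ ^ n := by
    have h6 : ‖p.eval z‖ * ‖z‖ ≤ a / 2 * ‖z‖ ^ n * ‖z‖ := by
      refine le_trans hpe ?_
      have h7 : (0:ℝ) ≤ ‖z‖ ^ n := by positivity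
      nlinarith
    exact le_of_mul_le_mul_right h6 hz0
  linarith

lemma tendsto_aux (s K : ℝ) : Tendsto (fun r : ℝ => (K + s * r - Real.log r) / r) atTop (𝓝 s) := by
  have h1 : Tendsto (fun r : ℝ => K / r) atTop (𝓝 0) := tendsto_const_nhds.div_atTop tendsto_id
  have h2 : Tendsto (fun r : ℝ => Real.log r / r) atTop (𝓝 0) :=
    Real.isLittleO_log_id_atTop.tendsto_div_nhds_zero
  have h3 := (h1.add (tendsto_const_nhds (x := s))).sub h2
  rw [zero_add, sub_zero] at h3
  refine Tendsto.congr' ?_ h3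
  filter_upwards [eventually_gt_atTop 0] with r hr
  field_simp

lemma core_tendsto (l : ℕ) (p q : Polynomial ℂ) (hpd : p.natDegree ≤ l) (hqd : q.natDegree ≤ l)
    (hqc : q.coeff l ≠ 0) (c s : ℝ) (hc : 0 < c) (hs : 0 < s)
    (z u v : ℝ → ℂ)
    (hz : ∀ᶠ r in atTop, ‖z r‖ = c * r)
    (hu : ∀ᶠ r in atTop, ‖u r‖ = Real.exp (-(s * r)))
    (hv : ∀ᶠ r in atTop, ‖v r‖ = Real.exp (s * r)) :
    Tendsto (fun r => Real.log (‖p.eval (z r) * u r + q.eval (z r) * v r‖ / (c * r) ^ (l + 1)) / r)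
      atTop (𝓝 s) := by
  obtain ⟨Cp, hCp0, hCp⟩ := poly_upper p l hpd
  obtain ⟨Cq, hCq0, hCq⟩ := poly_upper q l hqd
  set Cm : ℝ := max Cp Cq with hCm
  have hCm0 : 0 < Cm := lt_of_lt_of_le hCp0 (le_max_left _ _)
  obtain ⟨R, hR1, hRlow⟩ := poly_lower q l hqd hqc
  set a : ℝ := ‖q.coeff l‖ / 2 with ha
  have ha0 : 0 < a := by
    have := norm_pos_iff.mpr hqc
    positivity
  have hsr : Tendsto (fun r : ℝ => s * r) atTop atTop :=
    Tendsto.const_mul_atTop hs tendsto_id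
  have hexp : Tendsto (fun r : ℝ => Real.exp (s * r)) atTop atTop :=
    Real.tendsto_exp_atTop.comp hsr
  -- the exponential comparison is eventually true
  have hcomp : ∀ᶠ r : ℝ in atTop, Cm * Real.exp (-(s * r)) ≤ a / 2 * Real.exp (s * r) := by
    filter_upwards [eventually_ge_atTop 0, hexp.eventually_ge_atTop (2 * Cm / a)] with r hr0 hr1
    have h1 : Real.exp (-(s * r)) ≤ 1 := by
      rw [Real.exp_le_one_iff]
      nlinarith
    have h2 : Cm ≤ a / 2 * Real.exp (s * r) := by
      rw [div_le_iff₀ ha0] at hr1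
      nlinarith
    nlinarith [Real.exp_pos (-(s * r))]
  have hbig : ∀ᶠ r : ℝ in atTop, max 1 R ≤ c * r ∧ 1 ≤ r := by
    have : Tendsto (fun r : ℝ => c * r) atTop atTop := Tendsto.const_mul_atTop hc tendsto_id
    filter_upwards [this.eventually_ge_atTop (max 1 R), eventually_ge_atTop 1] with r h1 h2
    exact ⟨h1, h2⟩
  -- bounds on the norm
  have hmain : ∀ᶠ r : ℝ in atTop,
      a / 2 * (c * r) ^ l * Real.exp (s * r) ≤ ‖p.eval (z r) * u r + q.eval (z r) * v r‖ ∧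
      ‖p.eval (z r) * u r + q.eval (z r) * v r‖ ≤ 2 * Cm * (c * r) ^ l * Real.exp (s * r) := by
    filter_upwards [hz, hu, hv, hcomp, hbig] with r hzr hur hvr hcr ⟨hbr, hr1⟩
    have hcr1 : (1:ℝ) ≤ c * r := le_trans (le_max_left _ _) hbr
    have hcrR : R ≤ c * r := le_trans (le_max_right _ _) hbr
    have hz1 : 1 ≤ ‖z r‖ := by rw [hzr]; exact hcr1
    have hzR : R ≤ ‖z r‖ := by rw [hzr]; exact hcrR
    have hq1 : ‖q.coeff l‖ / 2 * ‖z r‖ ^ l ≤ ‖q.eval (z r)‖ := hRlow _ hzR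
    have hqu : ‖q.eval (z r)‖ ≤ Cm * ‖z r‖ ^ l :=
      le_trans (hCq _ hz1) (mul_le_mul_of_nonneg_right (le_max_right _ _) (by positivity))
    have hpu : ‖p.eval (z r)‖ ≤ Cm * ‖z r‖ ^ l :=
      le_trans (hCp _ hz1) (mul_le_mul_of_nonneg_right (le_max_left _ _) (by positivity))
    rw [hzr] at hq1 hqu hpu
    have hnu : ‖p.eval (z r) * u r‖ = ‖p.eval (z r)‖ * Real.exp (-(s * r)) := by
      rw [norm_mul, hur]
    have hnv : ‖q.eval (z r) * v r‖ = ‖q.eval (z r)‖ * Real.exp (s * r) := by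
      rw [norm_mul, hvr]
    have hepos := Real.exp_pos (s * r)
    have hepos' := Real.exp_pos (-(s * r))
    have hcrl : (0:ℝ) ≤ (c * r) ^ l := by positivity
    constructor
    · -- lower bound
      have h5 : ‖q.eval (z r) * v r‖ - ‖p.eval (z r) * u r‖
          ≤ ‖p.eval (z r) * u r + q.eval (z r) * v r‖ := by
        have := norm_sub_le (p.eval (z r) * u r + q.eval (z r) * v r) (p.eval (z r) * u r)
        simp only [add_sub_cancel_left] at this
        linarith
      have h6 : a * (c * r) ^ l * Real.exp (s * r) ≤ ‖q.eval (z r) * v r‖ := by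
        rw [hnv, ha]
        exact mul_le_mul_of_nonneg_right hq1 hepos.le
      have h7 : ‖p.eval (z r) * u r‖ ≤ Cm * (c * r) ^ l * Real.exp (-(s * r)) := by
        rw [hnu]
        exact mul_le_mul_of_nonneg_right hpu hepos'.le
      have h8 : Cm * (c * r) ^ l * Real.exp (-(s * r))
          ≤ a / 2 * (c * r) ^ l * Real.exp (s * r) := by
        calc Cm * (c * r) ^ l * Real.exp (-(s * r))
            = (c * r) ^ l * (Cm * Real.exp (-(s * r))) := by ring
          _ ≤ (c * r) ^ l * (a / 2 * Real.exp (s * r)) := mul_le_mul_of_nonneg_left hcr hcrl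
          _ = a / 2 * (c * r) ^ l * Real.exp (s * r) := by ring
      linarith
    · -- upper bound
      refine le_trans (norm_add_le _ _) ?_
      have h6 : ‖q.eval (z r) * v r‖ ≤ Cm * (c * r) ^ l * Real.exp (s * r) := by
        rw [hnv]
        exact mul_le_mul_of_nonneg_right hqu hepos.le
      have h7 : ‖p.eval (z r) * u r‖ ≤ Cm * (c * r) ^ l * Real.exp (s * r) := by
        rw [hnu]
        have h9 : Real.exp (-(s * r)) ≤ Real.exp (s * r) := by
          apply Real.exp_le_exp.mpr
          nlinarith
        calc ‖p.eval (z r)‖ * Real.exp (-(s * r))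
            ≤ Cm * (c * r) ^ l * Real.exp (-(s * r)) :=
              mul_le_mul_of_nonneg_right hpu hepos'.le
          _ ≤ Cm * (c * r) ^ l * Real.exp (s * r) := by
              exact mul_le_mul_of_nonneg_left h9 (by positivity)
      linarith
  -- now squeeze the logs
  have hlow := tendsto_aux s (Real.log (a / 2) - Real.log c)
  have hhigh := tendsto_aux s (Real.log (2 * Cm) - Real.log c)
  refine tendsto_of_tendsto_of_tendsto_of_le_of_le' hlow hhigh ?_ ?_
  · filter_upwards [hmain, hbig, eventually_gt_atTop 0] with r ⟨h1, h2⟩ ⟨hbr, _⟩ hr0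
    have hcr0 : (0:ℝ) < c * r := by positivity
    have hcr1 : (1:ℝ) ≤ c * r := le_trans (le_max_left _ _) hbr
    have hLpos : (0:ℝ) < a / 2 * (c * r) ^ l * Real.exp (s * r) := by positivity
    have hdpos : (0:ℝ) < (c * r) ^ (l + 1) := by positivity
    have hlog : Real.log (a / 2 * Real.exp (s * r) / (c * r))
        ≤ Real.log (‖p.eval (z r) * u r + q.eval (z r) * v r‖ / (c * r) ^ (l + 1)) := by
      apply Real.log_le_log (by positivity)
      rw [div_le_div_iff₀ (by positivity) hdpos]
      calc a / 2 * Real.exp (s * r) * (c * r) ^ (l + 1)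
          = a / 2 * (c * r) ^ l * Real.exp (s * r) * (c * r) := by rw [pow_succ]; ring
        _ ≤ ‖p.eval (z r) * u r + q.eval (z r) * v r‖ * (c * r) := by
            exact mul_le_mul_of_nonneg_right h1 hcr0.le
    have hval : Real.log (a / 2 * Real.exp (s * r) / (c * r))
        = Real.log (a / 2) - Real.log c + s * r - Real.log r := by
      rw [Real.log_div (by positivity) (by positivity), Real.log_mul (by positivity)
        (Real.exp_ne_zero _), Real.log_exp, Real.log_mul hc.ne' (by positivity)]
      ring
    rw [hval] at hlog
    exact (div_le_div_iff_of_pos_right hr0).mpr hlog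
  · filter_upwards [hmain, hbig, eventually_gt_atTop 0] with r ⟨h1, h2⟩ ⟨hbr, _⟩ hr0
    have hcr0 : (0:ℝ) < c * r := by positivity
    have hLpos : (0:ℝ) < a / 2 * (c * r) ^ l * Real.exp (s * r) := by positivity
    have hdpos : (0:ℝ) < (c * r) ^ (l + 1) := by positivity
    have hmpos : (0:ℝ) < ‖p.eval (z r) * u r + q.eval (z r) * v r‖ := lt_of_lt_of_le hLpos h1
    have hlog : Real.log (‖p.eval (z r) * u r + q.eval (z r) * v r‖ / (c * r) ^ (l + 1))
        ≤ Real.log (2 * Cm * Real.exp (s * r) / (c * r)) := by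
      apply Real.log_le_log (by positivity)
      rw [div_le_div_iff₀ hdpos (by positivity)]
      calc ‖p.eval (z r) * u r + q.eval (z r) * v r‖ * (c * r)
          ≤ 2 * Cm * (c * r) ^ l * Real.exp (s * r) * (c * r) :=
            mul_le_mul_of_nonneg_right h2 hcr0.le
        _ = 2 * Cm * Real.exp (s * r) * (c * r) ^ (l + 1) := by rw [pow_succ]; ring
    have hval : Real.log (2 * Cm * Real.exp (s * r) / (c * r))
        = Real.log (2 * Cm) - Real.log c + s * r - Real.log r := by
      rw [Real.log_div (by positivity) (by positivity), Real.log_mul (by positivity)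
        (Real.exp_ne_zero _), Real.log_exp, Real.log_mul hc.ne' (by positivity)]
      ring
    rw [hval] at hlog
    exact (div_le_div_iff_of_pos_right hr0).mpr hlog

lemma sin_expand (w : ℂ) : Complex.sin w
    = (-Complex.I/2) * Complex.exp (Complex.I*w) + (Complex.I/2) * Complex.exp (-(Complex.I*w)) := by
  have h0 : Complex.sin w
      = (Complex.exp (-w * Complex.I) - Complex.exp (w * Complex.I)) * Complex.I / 2 := rfl
  rw [h0, show -w * Complex.I = -(Complex.I*w) by ring,
    show w * Complex.I = Complex.I*w by ring]
  ring

lemma main_term (l : ℕ) (t : ℂ) :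
    (PA l).coeff l * Complex.exp (Complex.I * t) + (PB l).coeff l * Complex.exp (-(Complex.I * t))
      = Complex.sin (t + l * (π/2)) := by
  have e1 : Complex.exp ((π/2 : ℝ) * Complex.I) = Complex.I := by
    rw [Complex.exp_mul_I]
    push_cast
    rw [Complex.cos_pi_div_two, Complex.sin_pi_div_two]
    ring
  have h1 : (Complex.I : ℂ) ^ l = Complex.exp (Complex.I * (l * (π/2))) := by
    rw [show Complex.I * ((l:ℂ) * ((π:ℂ)/2)) = (l:ℕ) * (((π/2:ℝ):ℂ) * Complex.I) by
      push_cast; ring, Complex.exp_nat_mul, e1]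
  have e2 : Complex.exp (-((π/2 : ℝ) * Complex.I)) = -Complex.I := by
    rw [show -((π/2:ℝ) * Complex.I) = (-(π/2:ℝ):ℝ) * Complex.I by push_cast; ring,
      Complex.exp_mul_I]
    push_cast
    rw [Complex.cos_neg, Complex.sin_neg, Complex.cos_pi_div_two, Complex.sin_pi_div_two]
    ring
  have h2 : (-Complex.I : ℂ) ^ l = Complex.exp (-(Complex.I * (l * (π/2)))) := by
    rw [show -(Complex.I * ((l:ℂ) * ((π:ℂ)/2))) = (l:ℕ) * (-(((π/2:ℝ):ℂ) * Complex.I)) by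
      push_cast; ring, Complex.exp_nat_mul, e2]
  rw [coeff_PA, coeff_PB, sin_expand, h1, h2,
    show Complex.I * (t + l * (π/2)) = Complex.I * t + Complex.I * (l * (π/2)) by ring,
    Complex.exp_add,
    show -(Complex.I * t + Complex.I * (l * (π/2))) = -(Complex.I * t) + -(Complex.I * (l * (π/2))) by ring,
    Complex.exp_add]
  ring

lemma norm_exp_I_ofReal (t : ℝ) : ‖Complex.exp (Complex.I * (t:ℂ))‖ = 1 := by
  rw [Complex.norm_exp]
  simp

lemma norm_exp_neg_I_ofReal (t : ℝ) : ‖Complex.exp (-(Complex.I * (t:ℂ)))‖ = 1 := by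
  rw [Complex.norm_exp]
  simp

lemma NN_upper (l : ℕ) : ∃ C : ℝ, 0 < C ∧ ∀ t : ℝ, 1 ≤ |t| → ‖NN l (t:ℂ)‖ ≤ C * |t| ^ l := by
  obtain ⟨Cp, hCp0, hCp⟩ := poly_upper (PA l) l (natDegree_PA_le l)
  obtain ⟨Cq, hCq0, hCq⟩ := poly_upper (PB l) l (natDegree_PB_le l)
  refine ⟨Cp + Cq, by positivity, fun t ht => ?_⟩
  have hnt : ‖(t:ℂ)‖ = |t| := Complex.norm_real t
  have h1 : ‖(PA l).eval (t:ℂ)‖ ≤ Cp * |t| ^ l := by rw [← hnt]; exact hCp _ (hnt ▸ ht)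
  have h2 : ‖(PB l).eval (t:ℂ)‖ ≤ Cq * |t| ^ l := by rw [← hnt]; exact hCq _ (hnt ▸ ht)
  calc ‖NN l (t:ℂ)‖ ≤ ‖(PA l).eval (t:ℂ) * Complex.exp (Complex.I * t)‖
        + ‖(PB l).eval (t:ℂ) * Complex.exp (-(Complex.I * t))‖ := norm_add_le _ _
    _ = ‖(PA l).eval (t:ℂ)‖ + ‖(PB l).eval (t:ℂ)‖ := by
        rw [norm_mul, norm_mul, norm_exp_I_ofReal, norm_exp_neg_I_ofReal, mul_one, mul_one]
    _ ≤ Cp * |t| ^ l + Cq * |t| ^ l := add_le_add h1 h2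
    _ = (Cp + Cq) * |t| ^ l := by ring

lemma NN_lower_osc (l : ℕ) : ∃ M : ℝ, 1 ≤ M ∧ ∀ t : ℝ, M ≤ |t| →
    |Real.sin (t + l * (π/2))| = 1 → |t| ^ l / 2 ≤ ‖NN l (t:ℂ)‖ := by
  set pa : Polynomial ℂ := PA l - C ((PA l).coeff l) * X ^ l with hpa
  set pb : Polynomial ℂ := PB l - C ((PB l).coeff l) * X ^ l with hpb
  have hpad : pa.natDegree ≤ l := by
    refine le_trans (natDegree_sub_le _ _) (max_le (natDegree_PA_le l) ?_)
    exact le_trans natDegree_mul_le (by simp)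
  have hpbd : pb.natDegree ≤ l := by
    refine le_trans (natDegree_sub_le _ _) (max_le (natDegree_PB_le l) ?_)
    exact le_trans natDegree_mul_le (by simp)
  have hpac : pa.coeff l = 0 := by simp [hpa, coeff_sub, coeff_C_mul, coeff_X_pow]
  have hpbc : pb.coeff l = 0 := by simp [hpb, coeff_sub, coeff_C_mul, coeff_X_pow]
  obtain ⟨Ca, hCa0, hCa⟩ := poly_sub_lead pa l hpad hpac
  obtain ⟨Cb, hCb0, hCb⟩ := poly_sub_lead pb l hpbd hpbc
  refine ⟨max 1 (4 * (Ca + Cb)), le_max_left _ _, fun t ht hsin => ?_⟩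
  have ht1 : (1:ℝ) ≤ |t| := le_trans (le_max_left _ _) ht
  have ht0 : (0:ℝ) < |t| := lt_of_lt_of_le one_pos ht1
  have ht4 : 4 * (Ca + Cb) ≤ |t| := le_trans (le_max_right _ _) ht
  have hnt : ‖(t:ℂ)‖ = |t| := Complex.norm_real t
  -- split NN
  have hsplit : NN l (t:ℂ) = (t:ℂ) ^ l * ((PA l).coeff l * Complex.exp (Complex.I * t)
      + (PB l).coeff l * Complex.exp (-(Complex.I * t)))
      + (pa.eval (t:ℂ) * Complex.exp (Complex.I * t)
        + pb.eval (t:ℂ) * Complex.exp (-(Complex.I * t))) := by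
    simp only [NN, hpa, hpb, eval_sub, eval_mul, eval_C, eval_pow, eval_X]
    ring
  have hmainn : ‖(t:ℂ) ^ l * ((PA l).coeff l * Complex.exp (Complex.I * t)
      + (PB l).coeff l * Complex.exp (-(Complex.I * t)))‖ = |t| ^ l := by
    rw [norm_mul, norm_pow, hnt, main_term,
      show ((t:ℂ) + l * (π/2)) = ((t + l * (π/2) : ℝ) : ℂ) by push_cast; ring,
      ← Complex.ofReal_sin, Complex.norm_real, Real.norm_eq_abs, hsin, mul_one]
  have hresta : ‖pa.eval (t:ℂ)‖ * |t| ≤ Ca * |t| ^ l := by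
    have := hCa (t:ℂ) (hnt ▸ ht1)
    rwa [hnt] at this
  have hrestb : ‖pb.eval (t:ℂ)‖ * |t| ≤ Cb * |t| ^ l := by
    have := hCb (t:ℂ) (hnt ▸ ht1)
    rwa [hnt] at this
  have hrest : ‖pa.eval (t:ℂ) * Complex.exp (Complex.I * t)
      + pb.eval (t:ℂ) * Complex.exp (-(Complex.I * t))‖ ≤ |t| ^ l / 2 := by
    have h1 : ‖pa.eval (t:ℂ)‖ + ‖pb.eval (t:ℂ)‖ ≤ (Ca + Cb) * |t| ^ l / |t| := by
      rw [le_div_iff₀ ht0]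
      calc (‖pa.eval (t:ℂ)‖ + ‖pb.eval (t:ℂ)‖) * |t|
          = ‖pa.eval (t:ℂ)‖ * |t| + ‖pb.eval (t:ℂ)‖ * |t| := by ring
        _ ≤ Ca * |t| ^ l + Cb * |t| ^ l := add_le_add hresta hrestb
        _ = (Ca + Cb) * |t| ^ l := by ring
    have h2 : (Ca + Cb) * |t| ^ l / |t| ≤ |t| ^ l / 2 := by
      rw [div_le_div_iff₀ ht0 two_pos]
      have hpl : (0:ℝ) ≤ |t| ^ l := by positivity
      nlinarith
    calc ‖pa.eval (t:ℂ) * Complex.exp (Complex.I * t)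
        + pb.eval (t:ℂ) * Complex.exp (-(Complex.I * t))‖
        ≤ ‖pa.eval (t:ℂ)‖ * ‖Complex.exp (Complex.I * t)‖
          + ‖pb.eval (t:ℂ)‖ * ‖Complex.exp (-(Complex.I * t))‖ := by
          refine le_trans (norm_add_le _ _) ?_
          rw [norm_mul, norm_mul]
      _ = ‖pa.eval (t:ℂ)‖ + ‖pb.eval (t:ℂ)‖ := by
          rw [norm_exp_I_ofReal, norm_exp_neg_I_ofReal, mul_one, mul_one]
      _ ≤ (Ca + Cb) * |t| ^ l / |t| := h1
      _ ≤ |t| ^ l / 2 := h2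
  calc |t| ^ l / 2 = |t| ^ l - |t| ^ l / 2 := by ring
    _ ≤ ‖NN l (t:ℂ)‖ := by
        rw [hsplit]
        have := norm_sub_le ((t:ℂ) ^ l * ((PA l).coeff l * Complex.exp (Complex.I * t)
          + (PB l).coeff l * Complex.exp (-(Complex.I * t)))
          + (pa.eval (t:ℂ) * Complex.exp (Complex.I * t)
            + pb.eval (t:ℂ) * Complex.exp (-(Complex.I * t))))
          (pa.eval (t:ℂ) * Complex.exp (Complex.I * t)
            + pb.eval (t:ℂ) * Complex.exp (-(Complex.I * t)))
        simp only [add_sub_cancel_right] at this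
        have h3 := hmainn
        linarith [this, hrest]

end SphAux

open SphAux in
/-- Indicator of the spherical Bessel function (Lemma 3.7, first part):
. -/
theorem indicator_sphBessel
    (R₀ : ℝ) (hR₀ : 0 < R₀) (l : ℕ) (θ : ℝ) (hθ : θ ∈ Set.Icc (0:ℝ) (2 * π)) :
    indic (fun k => sphBessel l (k * R₀)) θ = ((R₀ * |Real.sin θ| : ℝ) : EReal) := by
  have hAc : (PA l).coeff l ≠ 0 := by
    intro h
    have := norm_coeff_PA l
    rw [h] at this
    simp at this
  have hBc : (PB l).coeff l ≠ 0 := by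
    intro h
    have := norm_coeff_PB l
    rw [h] at this
    simp at this
  set zf : ℝ → ℂ := fun r => (r : ℂ) * Complex.exp ((θ:ℂ) * Complex.I) * (R₀ : ℂ) with hzf
  have hznorm : ∀ r : ℝ, 0 ≤ r → ‖zf r‖ = R₀ * r := by
    intro r hr
    rw [hzf]
    simp only [norm_mul, Complex.norm_real, Real.norm_eq_abs,
      Complex.norm_exp]
    simp [abs_of_nonneg hr, abs_of_pos hR₀]
    ring
  have hzim : ∀ r : ℝ, (zf r).im = r * R₀ * Real.sin θ := by
    intro r
    rw [hzf]
    simp [Complex.mul_im, Complex.mul_re, Complex.exp_ofReal_mul_I_re, Complex.exp_ofReal_mul_I_im]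
    ring
  have hzne : ∀ r : ℝ, 0 < r → zf r ≠ 0 := by
    intro r hr
    rw [hzf]
    simp [Complex.exp_ne_zero, hR₀.ne', hr.ne']
  have hfnorm : ∀ r : ℝ, 0 < r →
      ‖sphBessel l ((r : ℂ) * Complex.exp ((θ:ℂ) * Complex.I) * (R₀:ℂ))‖
        = ‖SphAux.NN l (zf r)‖ / (R₀ * r) ^ (l + 1) := by
    intro r hr
    have h1 := SphAux.norm_sphBessel l (hzne r hr)
    rw [hznorm r hr.le] at h1
    exact h1
  have hu : ∀ r : ℝ, ‖Complex.exp (Complex.I * zf r)‖ = Real.exp (-(R₀ * Real.sin θ * r)) := by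
    intro r
    rw [Complex.norm_exp]
    congr 1
    rw [Complex.mul_re]
    simp [hzim r]
    ring
  have hv : ∀ r : ℝ, ‖Complex.exp (-(Complex.I * zf r))‖ = Real.exp (R₀ * Real.sin θ * r) := by
    intro r
    rw [Complex.norm_exp]
    congr 1
    rw [Complex.neg_re, Complex.mul_re]
    simp [hzim r]
    ring
  have hzev : ∀ᶠ r : ℝ in Filter.atTop, ‖zf r‖ = R₀ * r := by
    filter_upwards [Filter.eventually_ge_atTop 0] with r hr
    exact hznorm r hr
  rcases lt_trichotomy (Real.sin θ) 0 with hsin | hsin | hsin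
  · -- sin θ < 0 : dominant term is exp(I z)
    have hs : 0 < R₀ * (-Real.sin θ) := by
      have : 0 < -Real.sin θ := by linarith
      positivity
    have huev : ∀ᶠ r : ℝ in Filter.atTop,
        ‖Complex.exp (-(Complex.I * zf r))‖ = Real.exp (-(R₀ * -Real.sin θ * r)) := by
      filter_upwards with r
      rw [hv r]
      congr 1
      ring
    have hvev : ∀ᶠ r : ℝ in Filter.atTop,
        ‖Complex.exp (Complex.I * zf r)‖ = Real.exp (R₀ * -Real.sin θ * r) := by
      filter_upwards with r
      rw [hu r]
      congr 1
      ring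
    have hcore := SphAux.core_tendsto l (PB l) (PA l) (natDegree_PB_le l) (natDegree_PA_le l)
      hAc R₀ (R₀ * -Real.sin θ) hR₀ hs zf
      (fun r => Complex.exp (-(Complex.I * zf r))) (fun r => Complex.exp (Complex.I * zf r))
      hzev huev hvev
    have htend : Filter.Tendsto (fun r : ℝ =>
        Real.log ‖sphBessel l ((r : ℂ) * Complex.exp ((θ:ℂ) * Complex.I) * (R₀:ℂ))‖ / r)
        Filter.atTop (nhds (R₀ * -Real.sin θ)) := by
      refine hcore.congr' ?_
      filter_upwards [Filter.eventually_gt_atTop 0] with r hr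
      rw [hfnorm r hr]
      congr 3
      simp only [SphAux.NN]
      ring
    have hcoe : Filter.Tendsto (fun r : ℝ =>
        ((Real.log ‖sphBessel l ((r : ℂ) * Complex.exp ((θ:ℂ) * Complex.I) * (R₀:ℂ))‖ / r : ℝ)
          : EReal)) Filter.atTop (nhds ((R₀ * -Real.sin θ : ℝ) : EReal)) :=
      EReal.tendsto_coe.mpr htend
    rw [indic]
    have := hcoe.limsup_eq
    rw [show |Real.sin θ| = -Real.sin θ from abs_of_neg hsin]
    exact this
  · -- sin θ = 0
    have hexpθ : Complex.exp ((θ:ℂ) * Complex.I) = ((Real.cos θ : ℝ) : ℂ) := by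
      rw [Complex.exp_mul_I, ← Complex.ofReal_cos, ← Complex.ofReal_sin, hsin]
      simp
    have hzreal : ∀ r : ℝ, zf r = ((r * Real.cos θ * R₀ : ℝ) : ℂ) := by
      intro r
      rw [hzf]
      simp only [hexpθ]
      push_cast
      ring
    have hcossq : Real.cos θ * Real.cos θ = 1 := by
      have := Real.sin_sq_add_cos_sq θ
      rw [hsin] at this
      nlinarith
    have habscos : |Real.cos θ| = 1 := by
      rcases mul_self_eq_one_iff.mp hcossq with h | h <;> rw [h] <;> norm_num
    have htabs : ∀ r : ℝ, 0 ≤ r → |r * Real.cos θ * R₀| = R₀ * r := by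
      intro r hr
      rw [abs_mul, abs_mul, habscos, abs_of_nonneg hr, abs_of_pos hR₀]
      ring
    -- upper bound : limsup ≤ 0
    obtain ⟨Cu, hCu0, hCu⟩ := SphAux.NN_upper l
    have hub : ∀ᶠ r : ℝ in Filter.atTop, Real.log
        ‖sphBessel l ((r : ℂ) * Complex.exp ((θ:ℂ) * Complex.I) * (R₀:ℂ))‖ / r ≤ 0 := by
      have hRr : Filter.Tendsto (fun r : ℝ => R₀ * r) Filter.atTop Filter.atTop :=
        Filter.Tendsto.const_mul_atTop hR₀ Filter.tendsto_id
      filter_upwards [Filter.eventually_gt_atTop 0, hRr.eventually_ge_atTop 1,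
        hRr.eventually_ge_atTop Cu] with r hr h1 hC
      have hfn := hfnorm r hr
      rw [hzreal r] at hfn
      have habs : |r * Real.cos θ * R₀| = R₀ * r := htabs r hr.le
      have hnn : ‖SphAux.NN l ((r * Real.cos θ * R₀ : ℝ) : ℂ)‖ ≤ Cu * (R₀ * r) ^ l := by
        have := hCu (r * Real.cos θ * R₀) (by rw [habs]; exact h1)
        rwa [habs] at this
      have hle1 : ‖sphBessel l ((r : ℂ) * Complex.exp ((θ:ℂ) * Complex.I) * (R₀:ℂ))‖ ≤ 1 := by
        rw [hfn]
        rw [div_le_one (by positivity)]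
        calc ‖SphAux.NN l ((r * Real.cos θ * R₀ : ℝ) : ℂ)‖ ≤ Cu * (R₀ * r) ^ l := hnn
          _ ≤ (R₀ * r) * (R₀ * r) ^ l := by
              exact mul_le_mul_of_nonneg_right hC (by positivity)
          _ = (R₀ * r) ^ (l + 1) := by rw [pow_succ]; ring
      have hlog : Real.log ‖sphBessel l ((r : ℂ) * Complex.exp ((θ:ℂ) * Complex.I) * (R₀:ℂ))‖
          ≤ 0 := Real.log_nonpos (norm_nonneg _) hle1
      exact div_nonpos_iff.mpr (Or.inr ⟨hlog, hr.le⟩)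
    have hupper : indic (fun k => sphBessel l (k * R₀)) θ ≤ 0 := by
      rw [indic]
      calc Filter.limsup (fun r : ℝ => ((Real.log
            ‖sphBessel l ((r : ℂ) * Complex.exp ((θ:ℂ) * Complex.I) * (R₀:ℂ))‖ / r : ℝ)
              : EReal)) Filter.atTop
          ≤ Filter.limsup (fun _ : ℝ => (0 : EReal)) Filter.atTop := by
            refine Filter.limsup_le_limsup ?_
            filter_upwards [hub] with r hr
            exact_mod_cast EReal.coe_le_coe_iff.mpr hr
        _ = 0 := Filter.limsup_const 0
    -- lower bound : 0 ≤ limsup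
    obtain ⟨M, hM1, hMlow⟩ := SphAux.NN_lower_osc l
    set rm : ℕ → ℝ := fun m => (π/2 + m * π - Real.cos θ * (l * (π/2))) / R₀ with hrm
    have hrmtend : Filter.Tendsto rm Filter.atTop Filter.atTop := by
      apply Filter.Tendsto.atTop_div_const hR₀
      apply Filter.tendsto_atTop_add_const_right
      apply Filter.tendsto_atTop_add_const_left
      exact Filter.Tendsto.atTop_mul_const Real.pi_pos tendsto_natCast_atTop_atTop
    have hrmt : ∀ m : ℕ, rm m * Real.cos θ * R₀
        = Real.cos θ * (π/2 + m * π) - l * (π/2) := by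
      intro m
      have h0 : rm m * R₀ = π/2 + m * π - Real.cos θ * (l * (π/2)) :=
        div_mul_cancel₀ _ hR₀.ne'
      calc rm m * Real.cos θ * R₀ = (rm m * R₀) * Real.cos θ := by ring
        _ = (π/2 + m * π - Real.cos θ * (l * (π/2))) * Real.cos θ := by rw [h0]
        _ = Real.cos θ * (π/2 + m * π) - (Real.cos θ * Real.cos θ) * (l * (π/2)) := by ring
        _ = Real.cos θ * (π/2 + m * π) - l * (π/2) := by rw [hcossq]; ring
    have hsin1 : ∀ m : ℕ, |Real.sin (rm m * Real.cos θ * R₀ + l * (π/2))| = 1 := by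
      intro m
      rw [hrmt m, sub_add_cancel]
      have key : |Real.sin (π/2 + m * π)| = 1 := by
        rw [Real.sin_add, Real.sin_pi_div_two, Real.cos_pi_div_two, one_mul, zero_mul, add_zero,
          show ((m:ℝ) * π) = ((m:ℤ):ℝ) * π by push_cast; ring]
        exact Real.abs_cos_int_mul_pi m
      rcases mul_self_eq_one_iff.mp hcossq with h | h
      · rw [h, one_mul]
        exact key
      · rw [h, neg_one_mul, Real.sin_neg, abs_neg]
        exact key
    have hlogtend : Filter.Tendsto (fun r : ℝ => Real.log (2 * R₀ * r) / r)
        Filter.atTop (nhds 0) := by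
      have h1 : Filter.Tendsto (fun r : ℝ => Real.log (2 * R₀) / r + Real.log r / r)
          Filter.atTop (nhds 0) := by
        have ha : Filter.Tendsto (fun r : ℝ => Real.log (2 * R₀) / r) Filter.atTop (nhds 0) :=
          tendsto_const_nhds.div_atTop Filter.tendsto_id
        have := ha.add Real.isLittleO_log_id_atTop.tendsto_div_nhds_zero
        simpa using this
      refine Filter.Tendsto.congr' ?_ h1
      filter_upwards [Filter.eventually_gt_atTop 0] with r hr
      rw [show 2 * R₀ * r = (2 * R₀) * r by ring, Real.log_mul (by positivity) hr.ne', add_div]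
    have hfreq : ∀ ε : ℝ, 0 < ε → ∃ᶠ r : ℝ in Filter.atTop, -ε ≤ Real.log
        ‖sphBessel l ((r : ℂ) * Complex.exp ((θ:ℂ) * Complex.I) * (R₀:ℂ))‖ / r := by
      intro ε hε
      apply hrmtend.frequently
      apply Filter.Eventually.frequently
      have hRr : Filter.Tendsto (fun r : ℝ => R₀ * r) Filter.atTop Filter.atTop :=
        Filter.Tendsto.const_mul_atTop hR₀ Filter.tendsto_id
      filter_upwards [hrmtend.eventually (Filter.eventually_gt_atTop 0),
        hrmtend.eventually ((hRr.eventually_ge_atTop M)),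
        hrmtend.eventually (hlogtend.eventually_lt_const hε)] with m hr0 hM hεc
      set r : ℝ := rm m with hrdef
      have habs : |r * Real.cos θ * R₀| = R₀ * r := htabs r hr0.le
      have hlow := hMlow (r * Real.cos θ * R₀) (by rw [habs]; exact hM) (hsin1 m)
      rw [habs] at hlow
      have hfn := hfnorm r hr0
      rw [hzreal r] at hfn
      have hp : (0:ℝ) < R₀ * r := by positivity
      have hge : 1 / (2 * R₀ * r) ≤
          ‖sphBessel l ((r : ℂ) * Complex.exp ((θ:ℂ) * Complex.I) * (R₀:ℂ))‖ := by
        rw [hfn, div_le_div_iff₀ (by positivity) (by positivity)]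
        have hps : (R₀ * r) ^ (l + 1) = (R₀ * r) ^ l * (R₀ * r) := pow_succ _ _
        have hpl : (0:ℝ) < (R₀ * r) ^ l := pow_pos hp l
        nlinarith [hlow]
      have hlog : -Real.log (2 * R₀ * r) ≤ Real.log
          ‖sphBessel l ((r : ℂ) * Complex.exp ((θ:ℂ) * Complex.I) * (R₀:ℂ))‖ := by
        have h2 := Real.log_le_log (by positivity) hge
        rwa [one_div, Real.log_inv] at h2
      have h3 : -Real.log (2 * R₀ * r) / r ≤ Real.log
          ‖sphBessel l ((r : ℂ) * Complex.exp ((θ:ℂ) * Complex.I) * (R₀:ℂ))‖ / r :=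
        (div_le_div_iff_of_pos_right hr0).mpr hlog
      rw [neg_div] at h3
      linarith
    have hlower : (0 : EReal) ≤ indic (fun k => sphBessel l (k * R₀)) θ := by
      have hone : ∀ ε : ℝ, 0 < ε → ((-ε : ℝ) : EReal) ≤ indic (fun k => sphBessel l (k * R₀)) θ := by
        intro ε hε
        rw [indic]
        refine Filter.le_limsup_of_frequently_le' ?_
        refine (hfreq ε hε).mono ?_
        intro r hr
        exact_mod_cast EReal.coe_le_coe_iff.mpr hr
      have hseq : Filter.Tendsto (fun n : ℕ => ((-(1/(n+1)) : ℝ) : EReal))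
          Filter.atTop (nhds (0 : EReal)) := by
        rw [show (0:EReal) = ((0:ℝ):EReal) by simp]
        apply EReal.tendsto_coe.mpr
        have := tendsto_one_div_add_atTop_nhds_zero_nat (𝕜 := ℝ)
        simpa using this.neg
      exact le_of_tendsto' hseq fun n => hone (1/(n+1)) (by positivity)
    rw [hsin, abs_zero, mul_zero]
    rw [show ((0:ℝ):EReal) = (0:EReal) by simp]
    exact le_antisymm hupper hlower
  · -- sin θ > 0 : dominant term is exp(-(I z))
    have hs : 0 < R₀ * Real.sin θ := by positivity
    have huev : ∀ᶠ r : ℝ in Filter.atTop,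
        ‖Complex.exp (Complex.I * zf r)‖ = Real.exp (-(R₀ * Real.sin θ * r)) := by
      filter_upwards with r
      exact hu r
    have hvev : ∀ᶠ r : ℝ in Filter.atTop,
        ‖Complex.exp (-(Complex.I * zf r))‖ = Real.exp (R₀ * Real.sin θ * r) := by
      filter_upwards with r
      exact hv r
    have hcore := SphAux.core_tendsto l (PA l) (PB l) (natDegree_PA_le l) (natDegree_PB_le l)
      hBc R₀ (R₀ * Real.sin θ) hR₀ hs zf
      (fun r => Complex.exp (Complex.I * zf r)) (fun r => Complex.exp (-(Complex.I * zf r)))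
      hzev huev hvev
    have htend : Filter.Tendsto (fun r : ℝ =>
        Real.log ‖sphBessel l ((r : ℂ) * Complex.exp ((θ:ℂ) * Complex.I) * (R₀:ℂ))‖ / r)
        Filter.atTop (nhds (R₀ * Real.sin θ)) := by
      refine hcore.congr' ?_
      filter_upwards [Filter.eventually_gt_atTop 0] with r hr
      rw [hfnorm r hr]
      congr 3
    have hcoe : Filter.Tendsto (fun r : ℝ =>
        ((Real.log ‖sphBessel l ((r : ℂ) * Complex.exp ((θ:ℂ) * Complex.I) * (R₀:ℂ))‖ / r : ℝ)
          : EReal)) Filter.atTop (nhds ((R₀ * Real.sin θ : ℝ) : EReal)) :=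
      EReal.tendsto_coe.mpr htend
    rw [indic]
    have := hcoe.limsup_eq
    rw [show |Real.sin θ| = Real.sin θ from abs_of_pos hsin]
    exact this
end

section
/- Indicator of the derivative of the spherical Bessel function (Lemma 3.7, second part): for every R₀ > 0, every l ∈ ℕ and every θ ∈ [0, 2π], the indicator function of the entire function k ↦ j_l'(k·R₀) equals R₀·|sin θ|, i.e. limsup_{r→∞} log|j_l'(R₀·r·e^{iθ})| / r = R₀·|sin θ|. -/
open scoped Real

open Polynomial Complex Filter

noncomputable def opP (c : ℂ) (k : ℕ) (p : ℂ[X]) : ℂ[X] :=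
  X * (C c * p + derivative p) - C (k:ℂ) * p

lemma opP_eval (c : ℂ) (k : ℕ) (p : ℂ[X]) (z : ℂ) :
    (opP c k p).eval z = z * (c * p.eval z + p.derivative.eval z) - (k:ℂ) * p.eval z := by
  simp [opP]

lemma opP_coeff_top (c : ℂ) (k : ℕ) (p : ℂ[X]) :
    (opP c k p).coeff (p.natDegree + 1) = c * p.leadingCoeff := by
  have h1 : p.coeff (p.natDegree + 1) = 0 :=
    p.coeff_eq_zero_of_natDegree_lt (by omega)
  have h2 : p.derivative.coeff p.natDegree = 0 := by
    rw [Polynomial.coeff_derivative, h1]; ring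
  rw [opP, Polynomial.coeff_sub, Polynomial.coeff_X_mul, Polynomial.coeff_add,
    Polynomial.coeff_C_mul, Polynomial.coeff_C_mul, h1, h2, Polynomial.leadingCoeff]
  ring

lemma opP_natDegree_le (c : ℂ) (k : ℕ) (p : ℂ[X]) :
    (opP c k p).natDegree ≤ p.natDegree + 1 := by
  apply le_trans (Polynomial.natDegree_sub_le _ _)
  simp only [max_le_iff]
  constructor
  · apply le_trans (Polynomial.natDegree_mul_le)
    have : (C c * p + derivative p).natDegree ≤ p.natDegree := by
      apply le_trans (Polynomial.natDegree_add_le _ _)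
      simp only [max_le_iff]
      exact ⟨le_trans (Polynomial.natDegree_mul_le) (by simp),
        le_trans p.natDegree_derivative_le (by omega)⟩
    simpa [Polynomial.natDegree_X] using by omega
  · exact le_trans (Polynomial.natDegree_mul_le) (by simp)

lemma opP_natDegree (c : ℂ) (k : ℕ) (p : ℂ[X]) (hp : p ≠ 0) (hc : c ≠ 0) :
    (opP c k p).natDegree = p.natDegree + 1 ∧
      (opP c k p).leadingCoeff = c * p.leadingCoeff := by
  have hne : (opP c k p).coeff (p.natDegree + 1) ≠ 0 := by
    rw [opP_coeff_top]
    exact mul_ne_zero hc (Polynomial.leadingCoeff_ne_zero.2 hp)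
  have hdeg : (opP c k p).natDegree = p.natDegree + 1 :=
    le_antisymm (opP_natDegree_le c k p) (Polynomial.le_natDegree_of_ne_zero hne)
  refine ⟨hdeg, ?_⟩
  rw [Polynomial.leadingCoeff, hdeg, opP_coeff_top]

noncomputable def Pl : ℕ → ℂ[X]
  | 0 => C (-I/2)
  | (l+1) => opP I (2*l+1) (Pl l)

noncomputable def Ql : ℕ → ℂ[X]
  | 0 => C (I/2)
  | (l+1) => opP (-I) (2*l+1) (Ql l)

lemma deriv_form (p q : ℂ[X]) (k : ℕ) (z : ℂ) (hz : z ≠ 0) :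
    deriv (fun w => (cexp (I*w) * p.eval w + cexp (-(I*w)) * q.eval w) / w^(k+1)) z
      = (cexp (I*z) * (opP I (k+1) p).eval z
          + cexp (-(I*z)) * (opP (-I) (k+1) q).eval z) / z^(k+2) := by
  have hN : HasDerivAt (fun w => cexp (I*w) * p.eval w + cexp (-(I*w)) * q.eval w)
      ((cexp (I*z) * I * p.eval z + cexp (I*z) * p.derivative.eval z)
        + (cexp (-(I*z)) * (-I) * q.eval z + cexp (-(I*z)) * q.derivative.eval z)) z := by
    have h1 : HasDerivAt (fun w : ℂ => cexp (I*w)) (cexp (I*z) * I) z := by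
      simpa [mul_comm] using (((hasDerivAt_id z).const_mul I).cexp)
    have h2 : HasDerivAt (fun w : ℂ => cexp (-(I*w))) (cexp (-(I*z)) * (-I)) z := by
      simpa [mul_comm] using ((((hasDerivAt_id z).const_mul I).neg).cexp)
    exact ((h1.mul (p.hasDerivAt z))).add ((h2.mul (q.hasDerivAt z)))
  have hD : HasDerivAt (fun w : ℂ => w^(k+1)) (((k:ℂ)+1) * z^k) z := by
    simpa using hasDerivAt_pow (k+1) z
  have hzk : z^(k+1) ≠ 0 := pow_ne_zero _ hz
  have : deriv (fun w => (cexp (I*w) * p.eval w + cexp (-(I*w)) * q.eval w) / w^(k+1)) z = _ :=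
    (hN.div hD hzk).deriv
  rw [this]
  have hexp : cexp (-(I*z)) ≠ 0 := Complex.exp_ne_zero _
  simp only [opP, Polynomial.eval_sub, Polynomial.eval_mul, Polynomial.eval_add,
    Polynomial.eval_X, Polynomial.eval_C, Nat.cast_add, Nat.cast_mul,
    Nat.cast_ofNat, Nat.cast_one]
  field_simp
  ring

lemma eventually_ne (z : ℂ) (hz : z ≠ 0) : ∀ᶠ w in nhds z, w ≠ 0 :=
  isOpen_ne.eventually_mem hz

lemma iter_eq (l : ℕ) : ∀ z : ℂ, z ≠ 0 →
    ((fun f : ℂ → ℂ => fun w => (1 / w) * deriv f w)^[l] csinc) z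
      = (cexp (I*z) * (Pl l).eval z + cexp (-(I*z)) * (Ql l).eval z) / z^(2*l+1) := by
  induction l with
  | zero =>
    intro z hz
    simp only [Function.iterate_zero, id_eq, csinc, if_neg hz, Pl, Ql,
      Polynomial.eval_C, pow_one]
    rw [Complex.sin]
    field_simp
    ring
  | succ l ih =>
    intro z hz
    rw [Function.iterate_succ_apply']
    have hev : (fun w => ((fun f : ℂ → ℂ => fun w => (1 / w) * deriv f w)^[l] csinc) w)
        =ᶠ[nhds z] (fun w =>
          (cexp (I*w) * (Pl l).eval w + cexp (-(I*w)) * (Ql l).eval w) / w^(2*l+1)) := by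
      filter_upwards [eventually_ne z hz] with w hw using ih w hw
    have hd := hev.deriv_eq
    rw [hd, deriv_form _ _ _ _ hz]
    show (1/z) * _ = _
    rw [one_div, inv_mul_eq_div, div_div, ← pow_succ]
    norm_num [Pl, Ql]
    ring_nf

lemma sphBessel_eq_s10 (l : ℕ) (z : ℂ) (hz : z ≠ 0) :
    sphBessel l z = (cexp (I*z) * ((-1:ℂ[X])^l * Pl l).eval z
      + cexp (-(I*z)) * ((-1:ℂ[X])^l * Ql l).eval z) / z^(l+1) := by
  rw [sphBessel, iter_eq l z hz]
  have : (-z)^l = (-1:ℂ)^l * z^l := by rw [neg_pow]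
  rw [this]
  simp only [Polynomial.eval_mul, Polynomial.eval_pow, Polynomial.eval_neg, Polynomial.eval_one]
  have hzp : (z:ℂ)^(2*l+1) ≠ 0 := pow_ne_zero _ hz
  field_simp
  ring_nf

lemma Pl_deg (l : ℕ) : (Pl l).natDegree = l ∧ (Pl l) ≠ 0 := by
  induction l with
  | zero =>
    constructor
    · simp [Pl]
    · simp [Pl, Polynomial.C_eq_zero, Complex.I_ne_zero, _root_.div_eq_zero_iff]
  | succ l ih =>
    have h := opP_natDegree I (2*l+1) (Pl l) ih.2 Complex.I_ne_zero
    refine ⟨by rw [Pl, h.1, ih.1], ?_⟩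
    intro h0
    have := h.2
    rw [Pl] at h0
    rw [h0] at this
    simp only [Polynomial.leadingCoeff_zero] at this
    exact (mul_ne_zero Complex.I_ne_zero (Polynomial.leadingCoeff_ne_zero.2 ih.2)) this.symm

lemma Ql_deg (l : ℕ) : (Ql l).natDegree = l ∧ (Ql l) ≠ 0 := by
  have hI : (-I : ℂ) ≠ 0 := by simpa using Complex.I_ne_zero
  induction l with
  | zero =>
    constructor
    · simp [Ql]
    · simp [Ql, Polynomial.C_eq_zero, Complex.I_ne_zero, _root_.div_eq_zero_iff]
  | succ l ih =>
    have h := opP_natDegree (-I) (2*l+1) (Ql l) ih.2 hI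
    refine ⟨by rw [Ql, h.1, ih.1], ?_⟩
    intro h0
    have := h.2
    rw [Ql] at h0
    rw [h0] at this
    simp only [Polynomial.leadingCoeff_zero] at this
    exact (mul_ne_zero hI (Polynomial.leadingCoeff_ne_zero.2 ih.2)) this.symm

noncomputable def Apoly (l : ℕ) : ℂ[X] := opP I (l+1) ((-1:ℂ[X])^l * Pl l)
noncomputable def Bpoly (l : ℕ) : ℂ[X] := opP (-I) (l+1) ((-1:ℂ[X])^l * Ql l)

lemma neg_one_pow_mul_ne_zero {p : ℂ[X]} (hp : p ≠ 0) (l : ℕ) : (-1:ℂ[X])^l * p ≠ 0 := by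
  intro h
  apply hp
  have : ((-1:ℂ[X])^l) ≠ 0 := pow_ne_zero _ (by norm_num)
  exact (mul_eq_zero.1 h).resolve_left this

lemma Apoly_deg (l : ℕ) : (Apoly l).natDegree = l + 1 ∧ Apoly l ≠ 0 := by
  have hp := neg_one_pow_mul_ne_zero (Pl_deg l).2 l
  have h := opP_natDegree I (l+1) _ hp Complex.I_ne_zero
  have hdeg : ((-1:ℂ[X])^l * Pl l).natDegree = l := by
    rw [Polynomial.natDegree_mul (pow_ne_zero _ (by norm_num)) (Pl_deg l).2]
    simp [(Pl_deg l).1, Polynomial.natDegree_pow]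
  refine ⟨by rw [Apoly, h.1, hdeg], ?_⟩
  intro h0
  have := h.2
  rw [Apoly] at h0
  rw [h0] at this
  simp only [Polynomial.leadingCoeff_zero] at this
  exact (mul_ne_zero Complex.I_ne_zero (Polynomial.leadingCoeff_ne_zero.2 hp)) this.symm

lemma Bpoly_deg (l : ℕ) : (Bpoly l).natDegree = l + 1 ∧ Bpoly l ≠ 0 := by
  have hI : (-I : ℂ) ≠ 0 := by simpa using Complex.I_ne_zero
  have hp := neg_one_pow_mul_ne_zero (Ql_deg l).2 l
  have h := opP_natDegree (-I) (l+1) _ hp hI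
  have hdeg : ((-1:ℂ[X])^l * Ql l).natDegree = l := by
    rw [Polynomial.natDegree_mul (pow_ne_zero _ (by norm_num)) (Ql_deg l).2]
    simp [(Ql_deg l).1, Polynomial.natDegree_pow]
  refine ⟨by rw [Bpoly, h.1, hdeg], ?_⟩
  intro h0
  have := h.2
  rw [Bpoly] at h0
  rw [h0] at this
  simp only [Polynomial.leadingCoeff_zero] at this
  exact (mul_ne_zero hI (Polynomial.leadingCoeff_ne_zero.2 hp)) this.symm

lemma poly_bound (A : ℂ[X]) : ∃ C : ℝ, 0 ≤ C ∧ ∀ z : ℂ, 1 ≤ ‖z‖ →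
    ‖A.eval z‖ ≤ C * ‖z‖ ^ A.natDegree := by
  refine ⟨∑ i ∈ Finset.range (A.natDegree + 1), ‖A.coeff i‖,
    Finset.sum_nonneg fun i _ => norm_nonneg _, fun z hz => ?_⟩
  rw [Polynomial.eval_eq_sum_range]
  refine le_trans (norm_sum_le _ _) ?_
  rw [Finset.sum_mul]
  refine Finset.sum_le_sum fun i hi => ?_
  rw [norm_mul, norm_pow]
  refine mul_le_mul_of_nonneg_left ?_ (norm_nonneg _)
  exact pow_le_pow_right₀ hz (by simpa using Nat.lt_succ_iff.1 (Finset.mem_range.1 hi))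

lemma poly_lim (B : ℂ[X]) (w : ℂ) :
    Tendsto (fun r : ℝ => B.eval ((r:ℂ) * w) / (r:ℂ) ^ B.natDegree) atTop
      (nhds (B.leadingCoeff * w ^ B.natDegree)) := by
  obtain ⟨d, hd⟩ : ∃ d, B.natDegree = d := ⟨_, rfl⟩
  rw [hd]
  have key : ∀ i ∈ Finset.range (d+1),
      Tendsto (fun r : ℝ => B.coeff i * ((r:ℂ)*w)^i / (r:ℂ)^d) atTop
        (nhds (if i = d then B.leadingCoeff * w^d else 0)) := by
    intro i hi
    rcases eq_or_lt_of_le (Nat.lt_succ_iff.1 (Finset.mem_range.1 hi)) with h | h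
    · rw [if_pos h, h]
      apply Tendsto.congr' (f₁ := fun _ : ℝ => B.leadingCoeff * w ^ d)
      · filter_upwards [eventually_gt_atTop (0:ℝ)] with r hr
        have hr' : (r:ℂ) ≠ 0 := by exact_mod_cast hr.ne'
        rw [Polynomial.leadingCoeff, hd, mul_pow]
        rw [mul_comm ((r:ℂ)^d), mul_div_assoc, mul_div_assoc, div_self (pow_ne_zero _ hr'), mul_one]
      · exact tendsto_const_nhds
    · rw [if_neg h.ne]
      have hb : ∀ᶠ r : ℝ in atTop,
          ‖B.coeff i * ((r:ℂ)*w)^i / (r:ℂ)^d‖ ≤ (‖B.coeff i‖ * ‖w‖^i) * r⁻¹ := by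
        filter_upwards [eventually_ge_atTop (1:ℝ)] with r hr
        have hr0 : (0:ℝ) < r := lt_of_lt_of_le one_pos hr
        simp only [norm_div, norm_mul, norm_pow, mul_pow, Complex.norm_real,
          Real.norm_of_nonneg hr0.le]
        rw [div_le_iff₀ (by positivity)]
        calc ‖B.coeff i‖ * (r^i * ‖w‖^i)
            = (‖B.coeff i‖ * ‖w‖^i) * r^i := by ring
          _ ≤ (‖B.coeff i‖*‖w‖^i) * (r⁻¹ * r^d) := by
              refine mul_le_mul_of_nonneg_left ?_ (by positivity)
              rw [inv_mul_eq_div, le_div_iff₀ hr0, ← pow_succ]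
              exact pow_le_pow_right₀ hr h
          _ = ‖B.coeff i‖*‖w‖^i * r⁻¹ * r^d := by ring
      refine squeeze_zero_norm' hb ?_
      simpa using (tendsto_inv_atTop_zero).const_mul (‖B.coeff i‖ * ‖w‖^i)
  have := tendsto_finset_sum (Finset.range (d+1)) key
  rw [Finset.sum_ite_eq' (Finset.range (d+1)) d] at this
  simp only [Finset.mem_range, lt_add_iff_pos_left, Nat.lt_succ_iff, le_refl, if_pos] at this
  have h2 : (fun r : ℝ => ∑ i ∈ Finset.range (d+1), B.coeff i * ((r:ℂ)*w)^i / (r:ℂ)^d)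
      = fun r : ℝ => B.eval ((r:ℂ)*w) / (r:ℂ)^d := by
    funext r
    rw [Polynomial.eval_eq_sum_range, hd, Finset.sum_div]
  rw [h2] at this
  simpa using this

lemma tendsto_log_div_id : Tendsto (fun x : ℝ => Real.log x / x) atTop (nhds 0) := by
  have := Real.tendsto_pow_log_div_mul_add_atTop 1 0 1 one_ne_zero
  simpa using this

lemma tendsto_main (A B : ℂ[X]) (hB : B ≠ 0) (hAB : A.natDegree ≤ B.natDegree)
    (m : ℕ) (w : ℂ) (hw : 0 < w.im) :
    Tendsto (fun r : ℝ => Real.log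
        ‖(cexp (I*((r:ℂ)*w)) * A.eval ((r:ℂ)*w)
          + cexp (-(I*((r:ℂ)*w))) * B.eval ((r:ℂ)*w)) / ((r:ℂ)*w)^m‖ / r)
      atTop (nhds w.im) := by
  have hw0 : w ≠ 0 := fun h => by simp [h] at hw
  obtain ⟨CA, hCA0, hCA⟩ := poly_bound A
  set d := B.natDegree with hd
  set b := B.leadingCoeff with hbdef
  have hb : b ≠ 0 := Polynomial.leadingCoeff_ne_zero.2 hB
  set v : ℝ → ℂ := fun r => (cexp (2*(I*((r:ℂ)*w))) * A.eval ((r:ℂ)*w) + B.eval ((r:ℂ)*w)) / (r:ℂ)^d with hvdef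
  -- first term tends to 0
  have h1 : Tendsto (fun r : ℝ => cexp (2*(I*((r:ℂ)*w))) * A.eval ((r:ℂ)*w) / (r:ℂ)^d)
      atTop (nhds 0) := by
    have hg0 : Tendsto (fun r : ℝ => Real.exp (-(2*w.im*r))) atTop (nhds 0) :=
      Real.tendsto_exp_neg_atTop_nhds_zero.comp
        (Tendsto.const_mul_atTop (by linarith : (0:ℝ) < 2*w.im) tendsto_id)
    have hg : Tendsto (fun r : ℝ => (CA * ‖w‖^d) * Real.exp (-(2*w.im*r))) atTop (nhds 0) := by
      simpa using hg0.const_mul (CA * ‖w‖^d)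
    refine squeeze_zero_norm' ?_ hg
    filter_upwards [eventually_ge_atTop (1:ℝ), eventually_ge_atTop (1/‖w‖)] with r hr1 hrw
    have hr0 : (0:ℝ) < r := lt_of_lt_of_le one_pos hr1
    have hwn : (0:ℝ) < ‖w‖ := norm_pos_iff.2 hw0
    have hrw1 : 1 ≤ ‖(r:ℂ)*w‖ := by
      rw [norm_mul, Complex.norm_real, Real.norm_of_nonneg hr0.le]
      rw [div_le_iff₀ hwn] at hrw
      linarith
    have hA : ‖A.eval ((r:ℂ)*w)‖ ≤ CA * ‖(r:ℂ)*w‖ ^ d := by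
      refine le_trans (hCA _ hrw1) ?_
      refine mul_le_mul_of_nonneg_left ?_ hCA0
      exact pow_le_pow_right₀ hrw1 hAB
    have hexp : ‖cexp (2*(I*((r:ℂ)*w)))‖ = Real.exp (-(2*w.im*r)) := by
      rw [Complex.norm_exp]
      congr 1
      simp [Complex.mul_re, Complex.ofReal_re, Complex.ofReal_im]
      try ring
    have hnr : ‖((r:ℂ))^d‖ = r^d := by
      rw [norm_pow, Complex.norm_real, Real.norm_of_nonneg hr0.le]
    rw [norm_div, norm_mul, hexp, hnr, div_le_iff₀ (pow_pos hr0 d)]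
    calc Real.exp (-(2*w.im*r)) * ‖A.eval ((r:ℂ)*w)‖
        ≤ Real.exp (-(2*w.im*r)) * (CA * ‖(r:ℂ)*w‖^d) := by
          exact mul_le_mul_of_nonneg_left hA (Real.exp_pos _).le
      _ = CA * ‖w‖^d * Real.exp (-(2*w.im*r)) * r^d := by
          rw [norm_mul, Complex.norm_real, Real.norm_of_nonneg hr0.le, mul_pow]
          ring
  have hv : Tendsto v atTop (nhds (b * w^d)) := by
    have := (h1.add (poly_lim B w))
    rw [zero_add] at this
    apply this.congr
    intro r
    simp only [hvdef]
    rw [add_div]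
  have hL : (0:ℝ) < ‖b * w^d‖ := by
    rw [norm_mul, norm_pow]
    have := norm_pos_iff.2 hb
    have := pow_pos (norm_pos_iff.2 hw0) d
    positivity
  have hvn : Tendsto (fun r => ‖v r‖) atTop (nhds ‖b * w^d‖) := hv.norm
  have hvpos : ∀ᶠ r : ℝ in atTop, 0 < ‖v r‖ :=
    hvn.eventually (eventually_gt_nhds hL)
  have hlog : Tendsto (fun r => Real.log ‖v r‖) atTop (nhds (Real.log ‖b * w^d‖)) :=
    (Real.continuousAt_log hL.ne').tendsto.comp hvn
  -- main expression rewriting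
  have key : ∀ᶠ r : ℝ in atTop,
      Real.log ‖(cexp (I*((r:ℂ)*w)) * A.eval ((r:ℂ)*w)
          + cexp (-(I*((r:ℂ)*w))) * B.eval ((r:ℂ)*w)) / ((r:ℂ)*w)^m‖ / r
      = w.im + (Real.log ‖v r‖ + ((d:ℝ) - m) * Real.log r - m * Real.log ‖w‖) / r := by
    filter_upwards [eventually_gt_atTop (0:ℝ), hvpos] with r hr hvr
    have hrC : (r:ℂ) ≠ 0 := by exact_mod_cast hr.ne'
    have hfeq : (cexp (I*((r:ℂ)*w)) * A.eval ((r:ℂ)*w)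
          + cexp (-(I*((r:ℂ)*w))) * B.eval ((r:ℂ)*w)) / ((r:ℂ)*w)^m
        = cexp (-(I*((r:ℂ)*w))) * v r * (r:ℂ)^d / ((r:ℂ)*w)^m := by
      have hE : cexp (-(I*((r:ℂ)*w))) * cexp (2*(I*((r:ℂ)*w))) = cexp (I*((r:ℂ)*w)) := by
        rw [← Complex.exp_add]
        ring_nf
      have hnum : cexp (-(I*((r:ℂ)*w))) * v r * (r:ℂ)^d
          = cexp (I*((r:ℂ)*w)) * A.eval ((r:ℂ)*w) + cexp (-(I*((r:ℂ)*w))) * B.eval ((r:ℂ)*w) := by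
        simp only [hvdef]
        rw [mul_assoc, div_mul_cancel₀ _ (pow_ne_zero _ hrC), mul_add, ← mul_assoc, hE]
      rw [← hnum]
    rw [hfeq]
    have hnorm : ‖cexp (-(I*((r:ℂ)*w))) * v r * (r:ℂ)^d / ((r:ℂ)*w)^m‖
        = Real.exp (r * w.im) * ‖v r‖ * r^d / (r^m * ‖w‖^m) := by
      rw [norm_div, norm_mul, norm_mul, norm_pow, norm_pow, norm_mul,
        Complex.norm_real, Real.norm_of_nonneg hr.le, mul_pow]
      congr 2
      rw [Complex.norm_exp]
      congr 1
      simp [Complex.mul_re, Complex.ofReal_re, Complex.ofReal_im]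
      try ring
    rw [hnorm]
    have hwn : (0:ℝ) < ‖w‖ := norm_pos_iff.2 hw0
    rw [Real.log_div (by positivity) (by positivity),
      Real.log_mul (by positivity) (by positivity),
      Real.log_mul (by positivity) (by positivity),
      Real.log_mul (by positivity) (by positivity),
      Real.log_exp, Real.log_pow, Real.log_pow, Real.log_pow]
    field_simp
    ring
  rw [tendsto_congr' key]
  have : Tendsto (fun r : ℝ => (Real.log ‖v r‖ + ((d:ℝ) - m) * Real.log r - m * Real.log ‖w‖) / r)
      atTop (nhds 0) := by
    have t1 : Tendsto (fun r : ℝ => (Real.log ‖v r‖ - m * Real.log ‖w‖) / r) atTop (nhds 0) :=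
      Tendsto.div_atTop (hlog.sub_const _) tendsto_id
    have t2 : Tendsto (fun r : ℝ => ((d:ℝ) - m) * (Real.log r / r)) atTop (nhds 0) := by
      rw [show (0:ℝ) = ((d:ℝ)-m) * 0 by ring]
      exact tendsto_log_div_id.const_mul _
    have := t1.add t2
    rw [add_zero] at this
    apply this.congr
    intro r
    ring
  have := this.const_add w.im
  rw [add_zero] at this
  exact this

noncomputable def Gf (A B : ℂ[X]) (x : ℝ) : ℂ :=
  cexp (I*(x:ℂ)) * A.eval (x:ℂ) + cexp (-(I*(x:ℂ))) * B.eval (x:ℂ)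

lemma norm_cexp_I_real (x : ℝ) : ‖cexp (I*(x:ℂ))‖ = 1 := by
  rw [Complex.norm_exp]
  simp [Complex.mul_re]

lemma norm_cexp_neg_I_real (x : ℝ) : ‖cexp (-(I*(x:ℂ)))‖ = 1 := by
  rw [Complex.norm_exp]
  simp [Complex.mul_re]

lemma axis_upper (A B : ℂ[X]) (d : ℕ) (hA : A.natDegree ≤ d) (hB : B.natDegree ≤ d) :
    ∃ C : ℝ, 1 ≤ C ∧ ∀ x : ℝ, 1 ≤ x → ‖Gf A B x‖ ≤ C * x^d := by
  obtain ⟨CA, hCA0, hCA⟩ := poly_bound A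
  obtain ⟨CB, hCB0, hCB⟩ := poly_bound B
  refine ⟨CA + CB + 1, by linarith, fun x hx => ?_⟩
  have hx0 : (0:ℝ) < x := lt_of_lt_of_le one_pos hx
  have hxn : ‖(x:ℂ)‖ = x := by rw [Complex.norm_real, Real.norm_of_nonneg hx0.le]
  have hx1 : (1:ℝ) ≤ ‖(x:ℂ)‖ := by rw [hxn]; exact hx
  have bA : ‖A.eval (x:ℂ)‖ ≤ CA * x^d := by
    refine le_trans (hCA _ hx1) ?_
    rw [hxn]
    exact mul_le_mul_of_nonneg_left (pow_le_pow_right₀ hx hA) hCA0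
  have bB : ‖B.eval (x:ℂ)‖ ≤ CB * x^d := by
    refine le_trans (hCB _ hx1) ?_
    rw [hxn]
    exact mul_le_mul_of_nonneg_left (pow_le_pow_right₀ hx hB) hCB0
  calc ‖Gf A B x‖ ≤ ‖cexp (I*(x:ℂ)) * A.eval (x:ℂ)‖ + ‖cexp (-(I*(x:ℂ))) * B.eval (x:ℂ)‖ :=
        norm_add_le _ _
    _ = ‖A.eval (x:ℂ)‖ + ‖B.eval (x:ℂ)‖ := by
        rw [norm_mul, norm_mul, norm_cexp_I_real, norm_cexp_neg_I_real, one_mul, one_mul]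
    _ ≤ CA * x^d + CB * x^d := add_le_add bA bB
    _ ≤ (CA + CB + 1) * x^d := by nlinarith [pow_pos hx0 d]

set_option maxHeartbeats 1000000 in
lemma axis_lower (A B : ℂ[X]) (d : ℕ) (hd : 1 ≤ d)
    (hA : A.natDegree = d) (hB : B.natDegree = d) (hA0 : A ≠ 0) (hB0 : B ≠ 0) :
    ∃ x₀ c₀ : ℝ, 0 < c₀ ∧ ∀ᶠ n : ℕ in atTop,
      c₀ * (x₀ + n*π)^d ≤ ‖Gf A B (x₀ + n*π)‖ ∧ 1 ≤ x₀ + n*π := by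
  set a := A.leadingCoeff with hadef
  set b := B.leadingCoeff with hbdef
  have ha : a ≠ 0 := Polynomial.leadingCoeff_ne_zero.2 hA0
  have hb : b ≠ 0 := Polynomial.leadingCoeff_ne_zero.2 hB0
  have hna : (0:ℝ) < ‖a‖ := norm_pos_iff.2 ha
  have hnb : (0:ℝ) < ‖b‖ := norm_pos_iff.2 hb
  obtain ⟨u, hu1, hua⟩ : ∃ u : ℂ, ‖u‖ = 1 ∧ u * a = ((‖a‖/‖b‖ : ℝ):ℂ) * b := by
    refine ⟨((‖a‖/‖b‖ : ℝ):ℂ) * (b/a), ?_, ?_⟩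
    · rw [norm_mul, norm_div, Complex.norm_real, Real.norm_of_nonneg (by positivity),
        div_mul_div_comm, mul_comm ‖a‖]
      exact div_self (by positivity)
    · field_simp
  obtain ⟨x₀, hexpx0⟩ : ∃ x₀ : ℝ, cexp (2*I*(x₀:ℂ)) = u := by
    refine ⟨Complex.arg u / 2, ?_⟩
    have h := Complex.norm_mul_exp_arg_mul_I u
    rw [hu1] at h
    rw [show (2:ℂ)*I*((Complex.arg u / 2 : ℝ):ℂ) = (Complex.arg u : ℂ) * I by push_cast; ring]
    simpa using h
  obtain ⟨CA, hCA0, hCA⟩ := poly_bound A.eraseLead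
  obtain ⟨CB, hCB0, hCB⟩ := poly_bound B.eraseLead
  set S := ‖a‖ + ‖b‖ with hSdef
  have hS : 0 < S := by positivity
  refine ⟨x₀, S/2, by positivity, ?_⟩
  -- eventually n large
  have hxn_tendsto : Tendsto (fun n : ℕ => x₀ + n*π) atTop atTop := by
    apply tendsto_atTop_add_const_left
    exact Tendsto.atTop_mul_const Real.pi_pos tendsto_natCast_atTop_atTop
  have hev : ∀ᶠ n : ℕ in atTop, max 1 (2*(CA+CB)/S) ≤ x₀ + n*π :=
    hxn_tendsto.eventually (eventually_ge_atTop _)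
  filter_upwards [hev] with n hn
  set x : ℝ := x₀ + n*π with hxdef
  have hx1 : (1:ℝ) ≤ x := le_trans (le_max_left _ _) hn
  have hx0 : (0:ℝ) < x := lt_of_lt_of_le one_pos hx1
  have hxK : 2*(CA+CB)/S ≤ x := le_trans (le_max_right _ _) hn
  refine ⟨?_, hx1⟩
  -- the key exp identity
  have hexpx : cexp (2*I*(x:ℂ)) = u := by
    have heq : (2:ℂ)*I*((x:ℝ):ℂ) = 2*I*((x₀:ℝ):ℂ) + (n:ℕ) * (2*π*I) := by
      rw [hxdef]
      push_cast
      ring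
    rw [heq, Complex.exp_add, hexpx0, Complex.exp_nat_mul, Complex.exp_two_pi_mul_I,
      one_pow, mul_one]
  -- norm of G equals norm of modified sum
  have hGnorm : ‖Gf A B x‖ = ‖cexp (2*I*(x:ℂ)) * A.eval (x:ℂ) + B.eval (x:ℂ)‖ := by
    have : Gf A B x = cexp (-(I*(x:ℂ))) * (cexp (2*I*(x:ℂ)) * A.eval (x:ℂ) + B.eval (x:ℂ)) := by
      rw [Gf, mul_add, ← mul_assoc, ← Complex.exp_add]
      ring_nf
    rw [this, norm_mul, norm_cexp_neg_I_real, one_mul]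
  rw [hGnorm, hexpx]
  -- decompose A and B
  have hAdec : A.eval (x:ℂ) = A.eraseLead.eval (x:ℂ) + a * (x:ℂ)^d := by
    conv_lhs => rw [← A.eraseLead_add_C_mul_X_pow]
    simp [hA, hadef]
  have hBdec : B.eval (x:ℂ) = B.eraseLead.eval (x:ℂ) + b * (x:ℂ)^d := by
    conv_lhs => rw [← B.eraseLead_add_C_mul_X_pow]
    simp [hB, hbdef]
  have main : u * (a * (x:ℂ)^d) + b * (x:ℂ)^d = (((‖a‖/‖b‖ : ℝ):ℂ) + 1) * b * (x:ℂ)^d := by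
    rw [← mul_assoc, hua]; ring
  have hmainnorm : ‖(((‖a‖/‖b‖ : ℝ):ℂ) + 1) * b * (x:ℂ)^d‖ = S * x^d := by
    rw [norm_mul, norm_mul, norm_pow, Complex.norm_real, Real.norm_of_nonneg hx0.le]
    have : ‖(((‖a‖/‖b‖ : ℝ):ℂ) + 1)‖ = ‖a‖/‖b‖ + 1 := by
      rw [show (((‖a‖/‖b‖ : ℝ):ℂ) + 1) = (((‖a‖/‖b‖ + 1 : ℝ)):ℂ) by push_cast; ring]
      rw [Complex.norm_real, Real.norm_of_nonneg (by positivity)]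
    rw [this, hSdef, add_mul, one_mul,
      div_mul_eq_mul_div, mul_div_assoc, div_self (by positivity : ‖b‖ ≠ 0), mul_one]
  -- rest bound
  have hxc : ‖(x:ℂ)‖ = x := by rw [Complex.norm_real, Real.norm_of_nonneg hx0.le]
  have hx1c : (1:ℝ) ≤ ‖(x:ℂ)‖ := by rw [hxc]; exact hx1
  have hrestA : ‖A.eraseLead.eval (x:ℂ)‖ ≤ CA * x^(d-1) := by
    refine le_trans (hCA _ hx1c) ?_
    rw [hxc]
    refine mul_le_mul_of_nonneg_left (pow_le_pow_right₀ hx1 ?_) hCA0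
    have := A.eraseLead_natDegree_le
    omega
  have hrestB : ‖B.eraseLead.eval (x:ℂ)‖ ≤ CB * x^(d-1) := by
    refine le_trans (hCB _ hx1c) ?_
    rw [hxc]
    refine mul_le_mul_of_nonneg_left (pow_le_pow_right₀ hx1 ?_) hCB0
    have := B.eraseLead_natDegree_le
    omega
  -- put together
  have hsplit : u * A.eval (x:ℂ) + B.eval (x:ℂ)
      = (((‖a‖/‖b‖ : ℝ):ℂ) + 1) * b * (x:ℂ)^d
        + (u * A.eraseLead.eval (x:ℂ) + B.eraseLead.eval (x:ℂ)) := by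
    rw [hAdec, hBdec, ← main]; ring
  have hun : ‖u‖ = 1 := hu1
  have hrest : ‖u * A.eraseLead.eval (x:ℂ) + B.eraseLead.eval (x:ℂ)‖ ≤ (CA + CB) * x^(d-1) := by
    refine le_trans (norm_add_le _ _) ?_
    rw [norm_mul, hun, one_mul, add_mul]
    exact add_le_add hrestA hrestB
  have lower : S * x^d - (CA+CB) * x^(d-1) ≤ ‖u * A.eval (x:ℂ) + B.eval (x:ℂ)‖ := by
    rw [hsplit]
    have h1 : ‖(((‖a‖/‖b‖ : ℝ):ℂ) + 1) * b * (x:ℂ)^d‖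
          - ‖u * A.eraseLead.eval (x:ℂ) + B.eraseLead.eval (x:ℂ)‖
        ≤ ‖(((‖a‖/‖b‖ : ℝ):ℂ) + 1) * b * (x:ℂ)^d + (u * A.eraseLead.eval (x:ℂ) + B.eraseLead.eval (x:ℂ))‖ := by
      have h1' := norm_sub_norm_le ((((‖a‖/‖b‖ : ℝ):ℂ) + 1) * b * (x:ℂ)^d)
        (-(u * A.eraseLead.eval (x:ℂ) + B.eraseLead.eval (x:ℂ)))
      rw [norm_neg, sub_neg_eq_add] at h1'
      exact h1'
    rw [hmainnorm] at h1
    linarith [hrest]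
  refine le_trans ?_ lower
  -- S/2 * x^d ≤ S x^d - (CA+CB) x^(d-1)
  have hpow : x^d = x^(d-1) * x := by
    rw [← pow_succ]
    congr 1
    omega
  have hK : (CA+CB) * x^(d-1) ≤ (S/2) * x^d := by
    rw [hpow, ← mul_assoc]
    have h2 : 2*(CA+CB)/S * S = 2*(CA+CB) := by field_simp
    have : (CA+CB) * x ≥ 0 := by positivity
    nlinarith [pow_pos hx0 (d-1), pow_nonneg hx0.le (d-1), mul_le_mul_of_nonneg_left hxK (le_of_lt hS)]
  nlinarith [pow_pos hx0 d]

lemma axis_limsup (A B : ℂ[X]) (d m : ℕ) (hd : 1 ≤ d) (hdm : d < m)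
    (hA : A.natDegree = d) (hB : B.natDegree = d) (hA0 : A ≠ 0) (hB0 : B ≠ 0)
    (c : ℝ) (hc : 0 < c) (u : ℝ → ℝ)
    (hu : ∀ᶠ r : ℝ in atTop, u r = Real.log (‖Gf A B (r*c)‖ / (r*c)^m) / r) :
    Filter.limsup (fun r : ℝ => ((u r : ℝ) : EReal)) atTop = 0 := by
  obtain ⟨C, hC1, hC⟩ := axis_upper A B d hA.le hB.le
  have hub : ∀ᶠ r : ℝ in atTop, ((u r : ℝ) : EReal) ≤ ((Real.log C / r : ℝ) : EReal) := by
    filter_upwards [hu, eventually_ge_atTop (1:ℝ), eventually_ge_atTop (1/c)] with r hur hr1 hrc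
    have hr0 : (0:ℝ) < r := lt_of_lt_of_le one_pos hr1
    have hx1 : (1:ℝ) ≤ r*c := by
      rw [div_le_iff₀ hc] at hrc; nlinarith
    have hx0 : (0:ℝ) < r*c := lt_of_lt_of_le one_pos hx1
    have hval : ‖Gf A B (r*c)‖ / (r*c)^m ≤ C := by
      rw [div_le_iff₀ (pow_pos hx0 m)]
      calc ‖Gf A B (r*c)‖ ≤ C * (r*c)^d := hC _ hx1
        _ ≤ C * (r*c)^m :=
            mul_le_mul_of_nonneg_left (pow_le_pow_right₀ hx1 hdm.le) (by linarith)
    have hlog : Real.log (‖Gf A B (r*c)‖ / (r*c)^m) ≤ Real.log C := by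
      rcases eq_or_lt_of_le (by positivity : (0:ℝ) ≤ ‖Gf A B (r*c)‖ / (r*c)^m) with h | h
      · rw [← h, Real.log_zero]
        exact Real.log_nonneg hC1
      · exact Real.log_le_log h hval
    rw [hur]
    exact_mod_cast (div_le_div_iff_of_pos_right hr0).2 hlog
  have hupper : Filter.limsup (fun r : ℝ => ((u r : ℝ) : EReal)) atTop ≤ 0 := by
    refine le_trans (Filter.limsup_le_limsup hub) ?_
    have ht : Tendsto (fun r : ℝ => Real.log C / r) atTop (nhds 0) :=
      Tendsto.div_atTop tendsto_const_nhds tendsto_id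
    have h2 := (EReal.tendsto_coe.2 ht).limsup_eq
    rw [h2]
    rfl
  obtain ⟨x₀, c₀, hc₀, hev⟩ := axis_lower A B d hd hA hB hA0 hB0
  set xn : ℕ → ℝ := fun n => x₀ + n*π with hxn
  have hxnt : Tendsto xn atTop atTop := by
    apply tendsto_atTop_add_const_left
    exact Tendsto.atTop_mul_const Real.pi_pos tendsto_natCast_atTop_atTop
  set seq : ℕ → ℝ := fun n => xn n / c with hseq
  have hseqt : Tendsto seq atTop atTop := Tendsto.atTop_div_const hc hxnt
  set L : ℕ → ℝ := fun n => (Real.log c₀ + ((d:ℝ) - m) * Real.log (xn n)) / (xn n / c) with hL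
  have hLt : Tendsto L atTop (nhds 0) := by
    have hpsi : Tendsto (fun t : ℝ => (Real.log c₀) * (c/t) + (((d:ℝ)-m)*c) * (Real.log t/t))
        atTop (nhds 0) := by
      have h1 : Tendsto (fun t : ℝ => (Real.log c₀) * (c/t)) atTop (nhds 0) := by
        have h0 : Tendsto (fun t : ℝ => c/t) atTop (nhds 0) :=
          Tendsto.div_atTop tendsto_const_nhds tendsto_id
        simpa using h0.const_mul (Real.log c₀)
      have h2 : Tendsto (fun t : ℝ => (((d:ℝ)-m)*c) * (Real.log t/t)) atTop (nhds 0) := by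
        simpa using tendsto_log_div_id.const_mul (((d:ℝ)-m)*c)
      simpa using h1.add h2
    apply (hpsi.comp hxnt).congr'
    filter_upwards [hxnt.eventually (eventually_gt_atTop (0:ℝ))] with n hn
    show Real.log c₀ * (c / xn n) + ((d:ℝ)-m)*c * (Real.log (xn n)/(xn n))
      = (Real.log c₀ + ((d:ℝ) - m) * Real.log (xn n)) / (xn n / c)
    field_simp
  have hkey : ∀ᶠ n : ℕ in atTop, L n ≤ u (seq n) := by
    filter_upwards [hev, hseqt.eventually hu] with n hn hun
    obtain ⟨hlow, hx1⟩ := hn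
    have hx0 : (0:ℝ) < xn n := lt_of_lt_of_le one_pos hx1
    have hsc : seq n * c = xn n := div_mul_cancel₀ _ hc.ne'
    rw [hun, hsc]
    have hv1 : Real.log c₀ + ((d:ℝ)-m)*Real.log (xn n)
        ≤ Real.log (‖Gf A B (xn n)‖/(xn n)^m) := by
      have hpos : (0:ℝ) < c₀ * (xn n)^d / (xn n)^m := by positivity
      have hle : c₀ * (xn n)^d / (xn n)^m ≤ ‖Gf A B (xn n)‖ / (xn n)^m :=
        (div_le_div_iff_of_pos_right (pow_pos hx0 m)).2 hlow
      have hl := Real.log_le_log hpos hle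
      rw [Real.log_div (by positivity) (by positivity),
        Real.log_mul hc₀.ne' (by positivity), Real.log_pow, Real.log_pow] at hl
      push_cast at hl ⊢
      linarith
    exact (div_le_div_iff_of_pos_right (div_pos hx0 hc)).2 hv1
  refine le_antisymm hupper ?_
  by_contra hlt
  push_neg at hlt
  obtain ⟨δ, hδ1, hδ2⟩ := EReal.lt_iff_exists_real_btwn.1 hlt
  have hδneg : δ < 0 := by exact_mod_cast hδ2
  have hfreq : ∃ᶠ r : ℝ in atTop, ((δ:ℝ):EReal) ≤ ((u r : ℝ):EReal) := by
    apply hseqt.frequently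
    apply Filter.Eventually.frequently
    filter_upwards [hkey, hLt.eventually (eventually_gt_nhds hδneg)] with n h1 h2
    exact_mod_cast le_trans h2.le h1
  have hge := le_limsup_of_frequently_le hfreq
  exact absurd hge (not_le.2 hδ1)

-- derivative of sphBessel away from 0
lemma deriv_sphBessel (l : ℕ) (z : ℂ) (hz : z ≠ 0) :
    deriv (sphBessel l) z
      = (cexp (I*z) * (Apoly l).eval z + cexp (-(I*z)) * (Bpoly l).eval z) / z^(l+2) := by
  have hev : sphBessel l =ᶠ[nhds z] (fun w =>
      (cexp (I*w) * ((-1:ℂ[X])^l * Pl l).eval w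
        + cexp (-(I*w)) * ((-1:ℂ[X])^l * Ql l).eval w) / w^(l+1)) := by
    filter_upwards [isOpen_ne.eventually_mem hz] with w hw
    exact sphBessel_eq_s10 l w hw
  rw [hev.deriv_eq, deriv_form _ _ l z hz]
  rfl

lemma compneg_natDegree (p : ℂ[X]) : (p.comp (-X)).natDegree = p.natDegree := by
  rw [Polynomial.natDegree_comp]
  simp

lemma compneg_ne_zero (p : ℂ[X]) (hp : p ≠ 0) : p.comp (-X) ≠ 0 := by
  intro h
  apply hp
  apply Polynomial.zero_of_eval_zero
  intro x
  have := congrArg (Polynomial.eval (-x)) h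
  simpa [Polynomial.eval_comp] using this

/-- Indicator of the derivative of the spherical Bessel function (Lemma 3.7, second part):
. -/
theorem indicator_sphBessel_deriv
    (R₀ : ℝ) (hR₀ : 0 < R₀) (l : ℕ) (θ : ℝ) (hθ : θ ∈ Set.Icc (0:ℝ) (2 * π)) :
    indic (fun k => deriv (sphBessel l) (k * R₀)) θ = ((R₀ * |Real.sin θ| : ℝ) : EReal) := by
  have hA := Apoly_deg l
  have hB := Bpoly_deg l
  set w : ℂ := Complex.exp ((θ:ℂ) * Complex.I) * (R₀:ℂ) with hwdef
  have hwne : w ≠ 0 := mul_ne_zero (Complex.exp_ne_zero _) (by exact_mod_cast hR₀.ne')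
  have hwim : w.im = R₀ * Real.sin θ := by
    rw [hwdef, Complex.mul_im]
    simp [Complex.exp_im, Complex.mul_re, Complex.mul_im, Complex.ofReal_re, Complex.ofReal_im]
    ring
  have hargeq : ∀ r : ℝ, (↑r * Complex.exp ((θ:ℂ) * Complex.I)) * (R₀:ℂ) = (r:ℂ) * w := by
    intro r; rw [hwdef]; ring
  rw [indic]
  rcases lt_trichotomy (Real.sin θ) 0 with hs | hs | hs
  · -- sin θ < 0 : use the flipped polynomials
    set A' : ℂ[X] := (Bpoly l).comp (-X) with hA'def
    set B' : ℂ[X] := (Apoly l).comp (-X) with hB'def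
    have hB'0 : B' ≠ 0 := compneg_ne_zero _ hA.2
    have hdegs : A'.natDegree ≤ B'.natDegree := by
      rw [hA'def, hB'def, compneg_natDegree, compneg_natDegree, hA.1, hB.1]
    have hw' : (0:ℝ) < (-w).im := by
      rw [Complex.neg_im, hwim]
      nlinarith
    have ht := tendsto_main A' B' hB'0 hdegs (l+2) (-w) hw'
    have heq : ∀ᶠ r : ℝ in atTop,
        Real.log ‖(cexp (I*((r:ℂ)*(-w))) * A'.eval ((r:ℂ)*(-w))
          + cexp (-(I*((r:ℂ)*(-w)))) * B'.eval ((r:ℂ)*(-w))) / ((r:ℂ)*(-w))^(l+2)‖ / r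
        = Real.log ‖deriv (sphBessel l) ((↑r * Complex.exp ((θ:ℂ) * Complex.I)) * (R₀:ℂ))‖ / r := by
      filter_upwards [eventually_gt_atTop (0:ℝ)] with r hr
      have hrne : (r:ℂ) ≠ 0 := by exact_mod_cast hr.ne'
      have hz : (r:ℂ) * w ≠ 0 := mul_ne_zero hrne hwne
      rw [hargeq r, deriv_sphBessel l _ hz]
      congr 1
      have e1 : (r:ℂ)*(-w) = -((r:ℂ)*w) := by ring
      rw [e1]
      have eA : A'.eval (-((r:ℂ)*w)) = (Bpoly l).eval ((r:ℂ)*w) := by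
        rw [hA'def, Polynomial.eval_comp]
        simp
      have eB : B'.eval (-((r:ℂ)*w)) = (Apoly l).eval ((r:ℂ)*w) := by
        rw [hB'def, Polynomial.eval_comp]
        simp
      rw [eA, eB]
      rw [norm_div, norm_div, norm_pow, norm_pow, norm_neg]
      congr 2
      rw [show I * -((r:ℂ)*w) = -(I*((r:ℂ)*w)) by ring, neg_neg, add_comm]
    have ht2 : Tendsto (fun r : ℝ =>
        Real.log ‖deriv (sphBessel l) ((↑r * Complex.exp ((θ:ℂ) * Complex.I)) * (R₀:ℂ))‖ / r)
        atTop (nhds ((-w).im)) := ht.congr' heq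
    have := (EReal.tendsto_coe.2 ht2).limsup_eq
    convert this using 2
    rw [Complex.neg_im, hwim, abs_of_neg hs]
    ring
  · -- sin θ = 0
    have hzero : R₀ * |Real.sin θ| = 0 := by rw [hs]; simp
    rw [hzero]
    -- determine θ
    have hecases : Complex.exp ((θ:ℂ) * Complex.I) = 1 ∨ Complex.exp ((θ:ℂ) * Complex.I) = -1 := by
      obtain ⟨n, hn⟩ := Real.sin_eq_zero_iff.1 hs
      have hpi := Real.pi_pos
      obtain ⟨hθ0, hθ2⟩ := hθ
      have hn0 : (0:ℤ) ≤ n := by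
        by_contra hcon
        push_neg at hcon
        have h1 : n ≤ -1 := by omega
        have : (n:ℝ) ≤ -1 := by exact_mod_cast h1
        nlinarith
      have hn2 : n ≤ 2 := by
        by_contra hcon
        push_neg at hcon
        have : (3:ℝ) ≤ (n:ℝ) := by exact_mod_cast hcon
        nlinarith
      interval_cases n
      · left
        rw [← hn]
        simp
      · right
        rw [← hn]
        push_cast
        rw [one_mul]
        exact Complex.exp_pi_mul_I
      · left
        rw [← hn]
        push_cast
        exact Complex.exp_two_pi_mul_I
    have hm2 : (1:ℕ) ≤ l + 1 := by omega
    have hm3 : l + 1 < l + 2 := by omega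
    have hRC : ((R₀:ℝ):ℂ) ≠ 0 := by exact_mod_cast hR₀.ne'
    rcases hecases with he | he
    · -- exp(θI) = 1
      refine (axis_limsup (Apoly l) (Bpoly l) (l+1) (l+2) hm2 hm3 hA.1 hB.1 hA.2 hB.2
        R₀ hR₀ _ ?_).trans (by rfl)
      filter_upwards [eventually_gt_atTop (0:ℝ)] with r hr
      have hx : (0:ℝ) < r * R₀ := by positivity
      have hzz : (↑r * Complex.exp ((θ:ℂ) * Complex.I)) * (R₀:ℂ) = (((r*R₀ : ℝ)):ℂ) := by
        rw [he]
        push_cast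
        ring
      have hzne : (((r*R₀ : ℝ)):ℂ) ≠ 0 := by exact_mod_cast hx.ne'
      show Real.log ‖deriv (sphBessel l) _‖ / r = _
      rw [hzz, deriv_sphBessel l _ hzne]
      congr 2
      rw [norm_div, Gf, norm_pow, Complex.norm_real, Real.norm_of_nonneg hx.le]
    · -- exp(θI) = -1
      have hA' : ((Bpoly l).comp (-X)).natDegree = l + 1 := by
        rw [compneg_natDegree, hB.1]
      have hB' : ((Apoly l).comp (-X)).natDegree = l + 1 := by
        rw [compneg_natDegree, hA.1]
      refine (axis_limsup ((Bpoly l).comp (-X)) ((Apoly l).comp (-X)) (l+1) (l+2) hm2 hm3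
        hA' hB' (compneg_ne_zero _ hB.2) (compneg_ne_zero _ hA.2)
        R₀ hR₀ _ ?_).trans (by rfl)
      filter_upwards [eventually_gt_atTop (0:ℝ)] with r hr
      have hx : (0:ℝ) < r * R₀ := by positivity
      have hzz : (↑r * Complex.exp ((θ:ℂ) * Complex.I)) * (R₀:ℂ) = -(((r*R₀ : ℝ)):ℂ) := by
        rw [he]
        push_cast
        ring
      have hzne : -(((r*R₀ : ℝ)):ℂ) ≠ 0 := by
        simp only [neg_ne_zero]
        exact_mod_cast hx.ne'
      show Real.log ‖deriv (sphBessel l) _‖ / r = _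
      rw [hzz, deriv_sphBessel l _ hzne]
      congr 2
      rw [norm_div, Gf, norm_pow, norm_neg, Complex.norm_real, Real.norm_of_nonneg hx.le]
      congr 1
      have e1 : ∀ p : ℂ[X], (p.comp (-X)).eval (((r*R₀:ℝ)):ℂ) = p.eval (-(((r*R₀:ℝ)):ℂ)) := by
        intro p
        rw [Polynomial.eval_comp]
        simp
      rw [e1, e1]
      rw [show I * -(((r*R₀:ℝ)):ℂ) = -(I*(((r*R₀:ℝ)):ℂ)) by ring, neg_neg, add_comm]
  · -- sin θ > 0
    have hw' : (0:ℝ) < w.im := by rw [hwim]; positivity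
    have ht := tendsto_main (Apoly l) (Bpoly l) hB.2 (by rw [hA.1, hB.1]) (l+2) w hw'
    have heq : ∀ᶠ r : ℝ in atTop,
        Real.log ‖(cexp (I*((r:ℂ)*w)) * (Apoly l).eval ((r:ℂ)*w)
          + cexp (-(I*((r:ℂ)*w))) * (Bpoly l).eval ((r:ℂ)*w)) / ((r:ℂ)*w)^(l+2)‖ / r
        = Real.log ‖deriv (sphBessel l) ((↑r * Complex.exp ((θ:ℂ) * Complex.I)) * (R₀:ℂ))‖ / r := by
      filter_upwards [eventually_gt_atTop (0:ℝ)] with r hr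
      have hrne : (r:ℂ) ≠ 0 := by exact_mod_cast hr.ne'
      have hz : (r:ℂ) * w ≠ 0 := mul_ne_zero hrne hwne
      rw [hargeq r, deriv_sphBessel l _ hz]
    have ht2 : Tendsto (fun r : ℝ =>
        Real.log ‖deriv (sphBessel l) ((↑r * Complex.exp ((θ:ℂ) * Complex.I)) * (R₀:ℂ))‖ / r)
        atTop (nhds (w.im)) := ht.congr' heq
    have := (EReal.tendsto_coe.2 ht2).limsup_eq
    convert this using 2
    rw [hwim, abs_of_pos hs]
end
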